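/- arXiv:2605.24400 — 4 statements merged into one kernel-verified Lean document; each statement's English description precedes it below -/
import Mathlib

section
/- Let μ be the measure on ℝ^{n+1} obtained as the pushforward under Φ(r,ω) = (sinh r, (cosh r)·ω) of the measure (cosh r)^{n-1} dr dω on ℝ × S^{n-1}. Then μ is invariant under every linear isometry of the Minkowski form: for every linear map g : ℝ^{n+1} → ℝ^{n+1} satisfying B(gx, gy) = B(x,y) for all x,y, the pushforward of μ under g equals μ. -/
open MeasureTheory Real Metric
open scoped ENNReal NNReal

noncomputable section

/-- The Minkowski bilinear form on `ℝ^{n+1} = ℝ × ℝⁿ`: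
`B(x,y) = -x₀y₀ + x₁y₁ + ⋯ + xₙyₙ`. -/
def minkB {n : ℕ} (x y : ℝ × EuclideanSpace ℝ (Fin n)) : ℝ :=
  -(x.1 * y.1) + inner ℝ x.2 y.2

/-- The hyperboloid model of hyperbolic `n`-space:
`Iⁿ = {x : B(x,x) = -1, x₀ > 0}`. -/
def hypI (n : ℕ) : Set (ℝ × EuclideanSpace ℝ (Fin n)) :=
  {x | minkB x x = -1 ∧ 0 < x.1}

/-- The parametrization `Φ(r,ω) = (sinh r, (cosh r)·ω)` of de Sitter space by `ℝ × S^{n-1}`. -/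
def dSParam (n : ℕ) (p : ℝ × sphere (0 : EuclideanSpace ℝ (Fin n)) 1) :
    ℝ × EuclideanSpace ℝ (Fin n) :=
  (Real.sinh p.1, Real.cosh p.1 • (p.2 : EuclideanSpace ℝ (Fin n)))

/-- The measure `μ` on `ℝ^{n+1}`: the pushforward under `Φ(r,ω) = (sinh r, (cosh r)·ω)` of
the measure `(cosh r)^{n-1} dr dω` on `ℝ × S^{n-1}`, where `dr` is Lebesgue measure and `dω`
is the standard spherical measure on the unit sphere `S^{n-1} ⊆ ℝⁿ`. -/
def wallMeasure (n : ℕ) : Measure (ℝ × EuclideanSpace ℝ (Fin n)) :=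
  Measure.map (dSParam n)
    (((volume : Measure ℝ).withDensity
        (fun r => ENNReal.ofReal (Real.cosh r ^ (n - 1)))).prod
      ((volume : Measure (EuclideanSpace ℝ (Fin n))).toSphere))

namespace WallAux

open Set

abbrev E (n : ℕ) := EuclideanSpace ℝ (Fin n)

/-! ### Determinant of a Lorentz transformation -/

def Bform (n : ℕ) : (ℝ × E n) →ₗ[ℝ] (ℝ × E n) →ₗ[ℝ] ℝ :=
  LinearMap.mk₂ ℝ minkB
    (by intro x x' y; simp [minkB, inner_add_left]; ring)
    (by intro a x y; simp [minkB, real_inner_smul_left]; ring)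
    (by intro x y y'; simp [minkB, inner_add_right]; ring)
    (by intro a x y; simp [minkB, real_inner_smul_right]; ring)

def bb (n : ℕ) : Module.Basis (Unit ⊕ Fin n) ℝ (ℝ × E n) :=
  (Module.Basis.singleton Unit ℝ).prod (EuclideanSpace.basisFun (Fin n) ℝ).toBasis

lemma toMatrix₂_Bform (n : ℕ) :
    LinearMap.toMatrix₂ (bb n) (bb n) (Bform n)
      = Matrix.diagonal (Sum.elim (fun _ => (-1 : ℝ)) (fun _ => 1)) := by
  ext i j
  rw [LinearMap.toMatrix₂_apply]
  have horth := (EuclideanSpace.basisFun (Fin n) ℝ).orthonormal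
  rw [orthonormal_iff_ite] at horth
  rcases i with i | i <;> rcases j with j | j <;>
    simp [bb, Bform, minkB, Module.Basis.prod_apply, Module.Basis.singleton_apply, Matrix.diagonal, horth,
      Sum.elim] <;>
    try { split <;> simp_all }

lemma det_Bform_matrix (n : ℕ) :
    (LinearMap.toMatrix₂ (bb n) (bb n) (Bform n)).det = -1 := by
  rw [toMatrix₂_Bform, Matrix.det_diagonal, Fintype.prod_sum_type]
  simp

lemma det_sq (n : ℕ) (g : (ℝ × E n) →ₗ[ℝ] (ℝ × E n))
    (hg : ∀ x y, minkB (g x) (g y) = minkB x y) :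
    LinearMap.det g ^ 2 = 1 := by
  have hB : (Bform n).compl₁₂ g g = Bform n := by
    refine LinearMap.ext fun x => LinearMap.ext fun y => ?_
    simp [LinearMap.compl₁₂_apply, Bform, LinearMap.mk₂_apply, hg]
  have := congrArg Matrix.det (congrArg (LinearMap.toMatrix₂ (bb n) (bb n)) hB)
  rw [LinearMap.toMatrix₂_compl₁₂ (bb n) (bb n)] at this
  rw [Matrix.det_mul, Matrix.det_mul, Matrix.det_transpose, det_Bform_matrix] at this
  have hdet : LinearMap.det g = (LinearMap.toMatrix (bb n) (bb n) g).det :=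
    (LinearMap.det_toMatrix (bb n) g).symm
  rw [hdet]
  nlinarith [this]

lemma map_volume (n : ℕ) (g : (ℝ × E n) →ₗ[ℝ] (ℝ × E n))
    (hg : ∀ x y, minkB (g x) (g y) = minkB x y) :
    Measure.map g (volume : Measure (ℝ × E n)) = volume := by
  haveI : (volume : Measure (ℝ × E n)).IsAddHaarMeasure := by
    rw [Measure.volume_eq_prod ℝ (E n)]; infer_instance
  have h2 := det_sq n g hg
  have habs : |LinearMap.det g| = 1 := by
    rcases sq_eq_one_iff.mp h2 with h | h <;> simp [h]
  have hne : LinearMap.det g ≠ 0 := by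
    intro h; rw [h] at habs; simp at habs
  rw [Measure.map_linearMap_addHaar_eq_smul_addHaar _ hne]
  rw [abs_inv, habs]
  simp

/-! ### The 2D hyperbolic-polar change of variables -/

def Tmap (p : ℝ × ℝ) : ℝ × ℝ := (p.2 * Real.sinh p.1, p.2 * Real.cosh p.1)

def Tderiv (p : ℝ × ℝ) : (ℝ × ℝ) →L[ℝ] (ℝ × ℝ) :=
  (p.2 • (Real.cosh p.1 • ContinuousLinearMap.fst ℝ ℝ ℝ) +
      Real.sinh p.1 • ContinuousLinearMap.snd ℝ ℝ ℝ).prod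
    (p.2 • (Real.sinh p.1 • ContinuousLinearMap.fst ℝ ℝ ℝ) +
      Real.cosh p.1 • ContinuousLinearMap.snd ℝ ℝ ℝ)

lemma hasFDerivAt_Tmap (p : ℝ × ℝ) : HasFDerivAt Tmap (Tderiv p) p := by
  have h1 : HasFDerivAt (fun q : ℝ × ℝ => Real.sinh q.1)
      (Real.cosh p.1 • ContinuousLinearMap.fst ℝ ℝ ℝ) p :=
    (Real.hasDerivAt_sinh p.1).comp_hasFDerivAt p (hasFDerivAt_fst)
  have h2 : HasFDerivAt (fun q : ℝ × ℝ => Real.cosh q.1)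
      (Real.sinh p.1 • ContinuousLinearMap.fst ℝ ℝ ℝ) p :=
    (Real.hasDerivAt_cosh p.1).comp_hasFDerivAt p (hasFDerivAt_fst)
  have hs : HasFDerivAt (fun q : ℝ × ℝ => q.2) (ContinuousLinearMap.snd ℝ ℝ ℝ) p :=
    hasFDerivAt_snd
  exact (HasFDerivAt.prodMk (hs.mul h1) (hs.mul h2))

lemma det_Tderiv (p : ℝ × ℝ) : (Tderiv p).det = p.2 := by
  have : (Tderiv p).det =
      (LinearMap.toMatrix (Module.Basis.finTwoProd ℝ) (Module.Basis.finTwoProd ℝ)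
        ((Tderiv p) : (ℝ × ℝ) →ₗ[ℝ] (ℝ × ℝ))).det := by
    rw [LinearMap.det_toMatrix]
  rw [this, Matrix.det_fin_two]
  simp [LinearMap.toMatrix_apply, Module.Basis.finTwoProd_zero, Module.Basis.finTwoProd_one,
    Module.Basis.coe_finTwoProd_repr, Tderiv]
  linear_combination p.2 * Real.cosh_sq_sub_sinh_sq p.1

lemma injOn_Tmap : InjOn Tmap (univ ×ˢ Ioi (0:ℝ)) := by
  rintro ⟨r, s⟩ ⟨-, hs⟩ ⟨r', s'⟩ ⟨-, hs'⟩ h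
  simp only [Tmap, Prod.mk.injEq] at h
  rw [mem_Ioi] at hs hs'
  simp only at hs hs'
  obtain ⟨h1, h2⟩ := h
  have c := Real.cosh_sq_sub_sinh_sq r
  have c' := Real.cosh_sq_sub_sinh_sq r'
  have e1 : (s * Real.sinh r) ^ 2 = (s' * Real.sinh r') ^ 2 := by rw [h1]
  have e2 : (s * Real.cosh r) ^ 2 = (s' * Real.cosh r') ^ 2 := by rw [h2]
  have hsq : s ^ 2 = s' ^ 2 := by
    linear_combination e2 - e1 - s ^ 2 * c + s' ^ 2 * c'
  have hss : s = s' := by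
    rw [← Real.sqrt_sq hs.le, ← Real.sqrt_sq hs'.le, hsq]
  subst hss
  have hr : Real.sinh r = Real.sinh r' := mul_left_cancel₀ hs.ne' h1
  have := Real.sinh_injective hr
  simp [this]

lemma image_Tmap : Tmap '' (univ ×ˢ Ioi (0:ℝ)) = {p : ℝ × ℝ | |p.1| < p.2} := by
  ext p
  obtain ⟨a, b⟩ := p
  constructor
  · rintro ⟨⟨r, s⟩, ⟨-, hs⟩, heq⟩
    rw [mem_Ioi] at hs
    simp only at hs
    simp only [Tmap, Prod.mk.injEq] at heq
    obtain ⟨ha, hb⟩ := heq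
    subst ha; subst hb
    simp only [mem_setOf_eq, abs_mul, abs_of_pos hs]
    have h1 : |Real.sinh r| < Real.cosh r := by
      have := Real.cosh_sq_sub_sinh_sq r
      have hc := Real.cosh_pos r
      rw [abs_lt]
      constructor <;> nlinarith [abs_nonneg (Real.sinh r), sq_abs (Real.sinh r)]
    exact (mul_lt_mul_iff_right₀ hs).mpr h1
  · rintro hab
    simp only [mem_setOf_eq] at hab
    have hb : 0 < b := lt_of_le_of_lt (abs_nonneg a) hab
    have hba : a ^ 2 < b ^ 2 := by nlinarith [sq_abs a, abs_nonneg a]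
    set s := Real.sqrt (b ^ 2 - a ^ 2) with hs_def
    have hs : 0 < s := Real.sqrt_pos.mpr (by nlinarith)
    refine ⟨(Real.arsinh (a / s), s), ⟨trivial, hs⟩, ?_⟩
    have hss : s ^ 2 = b ^ 2 - a ^ 2 := Real.sq_sqrt (by nlinarith)
    simp only [Tmap, Real.sinh_arsinh, Real.cosh_arsinh]
    have hs0 : s ≠ 0 := hs.ne'
    have h2 : s * (a / s) = a := by field_simp
    have h3 : s * Real.sqrt (1 + (a / s) ^ 2) = b := by
      have e : s ^ 2 * (1 + (a / s) ^ 2) = s ^ 2 + a ^ 2 := by field_simp; try ring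
      have hmul : Real.sqrt (s ^ 2 * (1 + (a / s) ^ 2))
          = Real.sqrt (s ^ 2) * Real.sqrt (1 + (a / s) ^ 2) :=
        Real.sqrt_mul (sq_nonneg s) _
      rw [e, Real.sqrt_sq hs.le] at hmul
      rw [← hmul, hss, show b ^ 2 - a ^ 2 + a ^ 2 = b ^ 2 by ring, Real.sqrt_sq hb.le]
    rw [h2, h3]

/-! ### The key disintegration identity -/

def nuMap (n : ℕ) (x : ℝ × E n) : ℝ × E n := (Real.sqrt (minkB x x))⁻¹ • x

def Cset (n : ℕ) (A : Set (ℝ × E n)) : Set (ℝ × E n) :=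
  {x | minkB x x ∈ Ioc (0:ℝ) 1 ∧ nuMap n x ∈ A}

lemma continuous_minkB_self (n : ℕ) : Continuous (fun x : ℝ × E n => minkB x x) := by
  simp only [minkB]
  exact ((continuous_fst.mul continuous_fst).neg).add (continuous_snd.inner continuous_snd)

lemma measurable_nuMap (n : ℕ) : Measurable (nuMap n) := by
  refine Measurable.smul (f := fun x : ℝ × E n => (Real.sqrt (minkB x x))⁻¹) (g := id) ?_ ?_
  · exact ((Real.continuous_sqrt.comp (continuous_minkB_self n)).measurable).inv
  · exact measurable_id

lemma measurable_dSParam (n : ℕ) : Measurable (dSParam n) := by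
  apply Continuous.measurable
  unfold dSParam
  fun_prop

lemma measurableSet_Cset (n : ℕ) {A : Set (ℝ × E n)} (hA : MeasurableSet A) :
    MeasurableSet (Cset n A) :=
  (((continuous_minkB_self n).measurable) measurableSet_Ioc).inter
    ((measurable_nuMap n) hA)

lemma mem_Cset_smul (n : ℕ) (A : Set (ℝ × E n)) (ω : sphere (0 : E n) 1) (r s : ℝ)
    (hs : 0 < s) :
    ((s * Real.sinh r, (s * Real.cosh r) • (ω : E n)) ∈ Cset n A)
      ↔ (s ≤ 1 ∧ dSParam n (r, ω) ∈ A) := by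
  have hω : ‖(ω : E n)‖ = 1 := mem_sphere_zero_iff_norm.mp ω.2
  have hq : minkB (s * Real.sinh r, (s * Real.cosh r) • (ω : E n))
      (s * Real.sinh r, (s * Real.cosh r) • (ω : E n)) = s ^ 2 := by
    have hnorm : ‖(s * Real.cosh r) • (ω : E n)‖ ^ 2 = (s * Real.cosh r) ^ 2 := by
      rw [norm_smul, hω, mul_one, Real.norm_eq_abs, sq_abs]
    simp only [minkB, real_inner_self_eq_norm_sq, hnorm]
    have := Real.cosh_sq_sub_sinh_sq r
    nlinarith
  have hnu : nuMap n (s * Real.sinh r, (s * Real.cosh r) • (ω : E n)) = dSParam n (r, ω) := by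
    unfold nuMap
    rw [hq, Real.sqrt_sq hs.le]
    unfold dSParam
    rw [Prod.smul_mk, smul_smul]
    congr 1
    · simp; field_simp
    · congr 1; field_simp
  constructor
  · rintro ⟨hmem, hA'⟩
    rw [hq] at hmem
    rw [hnu] at hA'
    refine ⟨?_, hA'⟩
    rcases hmem with ⟨-, h1⟩
    nlinarith
  · rintro ⟨hs1, hA'⟩
    refine ⟨?_, by rwa [hnu]⟩
    rw [hq]
    constructor
    · positivity
    · nlinarith

lemma not_mem_Cset_zero (n : ℕ) (A : Set (ℝ × E n)) (x0 : ℝ) :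
    (x0, (0 : E n)) ∉ Cset n A := by
  rintro ⟨⟨h1, -⟩, -⟩
  simp only [minkB, inner_zero_left] at h1
  nlinarith

lemma not_mem_Cset_timelike (n : ℕ) (A : Set (ℝ × E n)) (x0 t : ℝ) (v : E n)
    (hv : ‖v‖ = 1) (ht : 0 ≤ t) (h : ¬ |x0| < t) :
    (x0, t • v) ∉ Cset n A := by
  rintro ⟨⟨h1, -⟩, -⟩
  have hnorm : ‖t • v‖ ^ 2 = t ^ 2 := by
    rw [norm_smul, hv, mul_one, Real.norm_eq_abs, sq_abs]
  simp only [minkB, real_inner_self_eq_norm_sq, hnorm] at h1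
  rw [not_lt] at h
  nlinarith [sq_abs x0, abs_nonneg x0]

/-! ### Per-omega computation -/

lemma perOmega (n : ℕ) (hn : n ≠ 0) (A : Set (ℝ × E n)) (hA : MeasurableSet A)
    (ω : sphere (0 : E n) 1) :
    ∫⁻ x0 : ℝ, ∫⁻ t in Ioi (0:ℝ),
        ENNReal.ofReal (t ^ (n - 1)) * (Cset n A).indicator 1 (x0, t • (ω : E n)) ∂volume ∂volume
      = ENNReal.ofReal (1 / (n + 1)) *
        ∫⁻ r : ℝ, ENNReal.ofReal (Real.cosh r ^ (n - 1)) * A.indicator 1 (dSParam n (r, ω))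
          ∂volume := by
  haveI : (volume : Measure (ℝ × ℝ)).IsAddHaarMeasure := by
    rw [Measure.volume_eq_prod ℝ ℝ]; infer_instance
  have hω : ‖(ω : E n)‖ = 1 := mem_sphere_zero_iff_norm.mp ω.2
  set f : ℝ × E n → ℝ≥0∞ := (Cset n A).indicator 1 with hf
  have hfmeas : Measurable f := measurable_const.indicator (measurableSet_Cset n hA)
  set H : ℝ × ℝ → ℝ≥0∞ :=
    fun p => ENNReal.ofReal (p.2 ^ (n - 1)) * f (p.1, p.2 • (ω : E n)) with hH
  have hHmeas : Measurable H := by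
    apply Measurable.mul
    · exact (measurable_snd.pow_const _).ennreal_ofReal
    · exact hfmeas.comp (measurable_fst.prodMk (measurable_snd.smul_const _))
  set Gfun : ℝ → ℝ≥0∞ :=
    fun r => ENNReal.ofReal (Real.cosh r ^ (n - 1)) * A.indicator 1 (dSParam n (r, ω)) with hG
  have hGmeas : Measurable Gfun := by
    apply Measurable.mul
    · exact (Real.continuous_cosh.measurable.pow_const _).ennreal_ofReal
    · exact (measurable_const.indicator hA).comp
        ((measurable_dSParam n).comp (measurable_id.prodMk measurable_const))
  set Kfun : ℝ → ℝ≥0∞ :=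
    fun t => (Ioc (0:ℝ) 1).indicator (fun u => ENNReal.ofReal (u ^ n)) t with hK
  have hKmeas : Measurable Kfun :=
    Measurable.indicator ((measurable_id.pow_const _).ennreal_ofReal) measurableSet_Ioc
  have hsetmeas : MeasurableSet ((univ : Set ℝ) ×ˢ Ioi (0:ℝ)) :=
    MeasurableSet.univ.prod measurableSet_Ioi
  have hVmeas : MeasurableSet {p : ℝ × ℝ | |p.1| < p.2} :=
    measurableSet_lt (measurable_fst.abs) measurable_snd
  have hrestr : (volume : Measure (ℝ × ℝ)).restrict (univ ×ˢ Ioi (0:ℝ))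
      = (volume : Measure ℝ).prod ((volume : Measure ℝ).restrict (Ioi (0:ℝ))) := by
    rw [Measure.volume_eq_prod ℝ ℝ, ← Measure.prod_restrict, Measure.restrict_univ]
  have stepA : ∫⁻ p in univ ×ˢ Ioi (0:ℝ), H p ∂(volume : Measure (ℝ × ℝ))
      = ∫⁻ x0 : ℝ, ∫⁻ t in Ioi (0:ℝ), H (x0, t) ∂volume ∂volume := by
    rw [hrestr]
    exact lintegral_prod _ hHmeas.aemeasurable
  have stepB : ∫⁻ p in univ ×ˢ Ioi (0:ℝ), H p ∂(volume : Measure (ℝ × ℝ))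
      = ∫⁻ p in {p : ℝ × ℝ | |p.1| < p.2}, H p ∂(volume : Measure (ℝ × ℝ)) := by
    rw [← lintegral_indicator hsetmeas, ← lintegral_indicator hVmeas]
    apply lintegral_congr
    intro p
    by_cases hpV : |p.1| < p.2
    · have hp1 : p ∈ univ ×ˢ Ioi (0:ℝ) :=
        ⟨trivial, lt_of_le_of_lt (abs_nonneg _) hpV⟩
      rw [Set.indicator_of_mem hp1,
        Set.indicator_of_mem (show p ∈ {q : ℝ × ℝ | |q.1| < q.2} from hpV)]
    · rw [Set.indicator_of_notMem (show p ∉ {q : ℝ × ℝ | |q.1| < q.2} from hpV)]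
      by_cases hp1 : p ∈ univ ×ˢ Ioi (0:ℝ)
      · rw [Set.indicator_of_mem hp1]
        have hpt : (0:ℝ) < p.2 := hp1.2
        have hzero : f (p.1, p.2 • (ω : E n)) = 0 :=
          Set.indicator_of_notMem
            (not_mem_Cset_timelike n A p.1 p.2 _ hω hpt.le hpV) _
        simp only [hH, hzero, mul_zero]
      · rw [Set.indicator_of_notMem hp1]
  have stepC : ∫⁻ p in Tmap '' (univ ×ˢ Ioi (0:ℝ)), H p ∂(volume : Measure (ℝ × ℝ))
      = ∫⁻ p in univ ×ˢ Ioi (0:ℝ),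
          ENNReal.ofReal |(Tderiv p).det| * H (Tmap p) ∂(volume : Measure (ℝ × ℝ)) :=
    lintegral_image_eq_lintegral_abs_det_fderiv_mul volume hsetmeas
      (fun x _ => (hasFDerivAt_Tmap x).hasFDerivWithinAt) injOn_Tmap H
  have stepD : ∀ p ∈ univ ×ˢ Ioi (0:ℝ),
      ENNReal.ofReal |(Tderiv p).det| * H (Tmap p) = Gfun p.1 * Kfun p.2 := by
    rintro ⟨r, s⟩ ⟨-, hs⟩
    rw [mem_Ioi] at hs
    simp only at hs
    rw [det_Tderiv]
    have habs : |(r, s).2| = s := abs_of_pos hs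
    rw [habs]
    have hTmap : Tmap (r, s) = (s * Real.sinh r, s * Real.cosh r) := rfl
    rw [hTmap]
    simp only [hH, hG, hK, hf]
    by_cases hmem : (s * Real.sinh r, (s * Real.cosh r) • (ω : E n)) ∈ Cset n A
    · obtain ⟨hs1, hAmem⟩ := (mem_Cset_smul n A ω r s hs).mp hmem
      rw [Set.indicator_of_mem hmem, Set.indicator_of_mem hAmem,
        Set.indicator_of_mem (show s ∈ Ioc (0:ℝ) 1 from ⟨hs, hs1⟩)]
      simp only [Pi.one_apply, mul_one]
      rw [← ENNReal.ofReal_mul hs.le, ← ENNReal.ofReal_mul (by positivity)]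
      congr 1
      have hn1 : n - 1 + 1 = n := Nat.succ_pred_eq_of_pos (Nat.pos_of_ne_zero hn)
      rw [mul_pow]
      calc s * (s ^ (n-1) * Real.cosh r ^ (n-1))
          = s ^ (n-1+1) * Real.cosh r ^ (n-1) := by ring
        _ = Real.cosh r ^ (n - 1) * s ^ n := by rw [hn1]; ring
    · rw [Set.indicator_of_notMem hmem, mul_zero]
      by_cases hs1 : s ≤ 1
      · have hAmem : dSParam n (r, ω) ∉ A :=
          fun h => hmem ((mem_Cset_smul n A ω r s hs).mpr ⟨hs1, h⟩)
        rw [Set.indicator_of_notMem hAmem]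
        simp
      · have hnotIoc : s ∉ Ioc (0:ℝ) 1 := fun h => hs1 h.2
        rw [Set.indicator_of_notMem hnotIoc]
        simp
  have stepE : ∫⁻ p in univ ×ˢ Ioi (0:ℝ), Gfun p.1 * Kfun p.2 ∂(volume : Measure (ℝ × ℝ))
      = (∫⁻ r, Gfun r ∂volume) * (∫⁻ t in Ioi (0:ℝ), Kfun t ∂volume) := by
    rw [hrestr]
    exact lintegral_prod_mul hGmeas.aemeasurable hKmeas.aemeasurable
  have stepF : ∫⁻ t in Ioi (0:ℝ), Kfun t ∂volume = ENNReal.ofReal (1 / (n + 1)) := by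
    rw [hK]
    rw [lintegral_indicator measurableSet_Ioc, Measure.restrict_restrict measurableSet_Ioc,
      Set.inter_eq_left.mpr Ioc_subset_Ioi_self]
    have hint : IntegrableOn (fun u : ℝ => u ^ n) (Ioc (0:ℝ) 1) volume :=
      (intervalIntegral.intervalIntegrable_pow n).1
    have hnn : 0 ≤ᵐ[volume.restrict (Ioc (0:ℝ) 1)] fun u : ℝ => u ^ n := by
      filter_upwards [ae_restrict_mem measurableSet_Ioc] with u hu
      exact pow_nonneg hu.1.le n
    rw [← ofReal_integral_eq_lintegral_ofReal hint hnn]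
    congr 1
    rw [← intervalIntegral.integral_of_le zero_le_one, integral_pow]
    norm_num
  calc ∫⁻ x0 : ℝ, ∫⁻ t in Ioi (0:ℝ),
        ENNReal.ofReal (t ^ (n - 1)) * f (x0, t • (ω : E n)) ∂volume ∂volume
      = ∫⁻ p in univ ×ˢ Ioi (0:ℝ), H p ∂(volume : Measure (ℝ × ℝ)) := stepA.symm
    _ = ∫⁻ p in {p : ℝ × ℝ | |p.1| < p.2}, H p ∂(volume : Measure (ℝ × ℝ)) := stepB
    _ = ∫⁻ p in Tmap '' (univ ×ˢ Ioi (0:ℝ)), H p ∂(volume : Measure (ℝ × ℝ)) := by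
        rw [image_Tmap]
    _ = ∫⁻ p in univ ×ˢ Ioi (0:ℝ),
          ENNReal.ofReal |(Tderiv p).det| * H (Tmap p) ∂(volume : Measure (ℝ × ℝ)) := stepC
    _ = ∫⁻ p in univ ×ˢ Ioi (0:ℝ), Gfun p.1 * Kfun p.2 ∂(volume : Measure (ℝ × ℝ)) :=
        setLIntegral_congr_fun hsetmeas stepD
    _ = (∫⁻ r, Gfun r ∂volume) * (∫⁻ t in Ioi (0:ℝ), Kfun t ∂volume) := stepE
    _ = ENNReal.ofReal (1 / (n + 1)) * ∫⁻ r, Gfun r ∂volume := by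
        rw [stepF, mul_comm]

/-! ### Slicing in the spatial variable -/

lemma slice (n : ℕ) (hn : n ≠ 0) (A : Set (ℝ × E n)) (hA : MeasurableSet A) (x0 : ℝ) :
    ∫⁻ v : E n, (Cset n A).indicator 1 (x0, v) ∂volume
      = ∫⁻ ω : sphere (0 : E n) 1, ∫⁻ t in Ioi (0:ℝ),
          ENNReal.ofReal (t ^ (n - 1)) * (Cset n A).indicator 1 (x0, t • (ω : E n)) ∂volume
          ∂(volume : Measure (E n)).toSphere := by
  haveI : Nontrivial (E n) := by
    apply Module.nontrivial_of_finrank_pos (R := ℝ)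
    rw [finrank_euclideanSpace_fin]
    exact Nat.pos_of_ne_zero hn
  set f : ℝ × E n → ℝ≥0∞ := (Cset n A).indicator 1 with hf
  have hfmeas : Measurable f := measurable_const.indicator (measurableSet_Cset n hA)
  have h0 : MeasurableSet ({0}ᶜ : Set (E n)) := (measurableSet_singleton 0).compl
  have hmp := Measure.measurePreserving_homeomorphUnitSphereProd (volume : Measure (E n))
  have hrank : Module.finrank ℝ (E n) - 1 = n - 1 := by rw [finrank_euclideanSpace_fin]
  rw [hrank] at hmp
  have hFmeas : Measurable (fun p : sphere (0 : E n) 1 × Ioi (0:ℝ) =>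
      f (x0, (p.2 : ℝ) • (p.1 : E n))) :=
    hfmeas.comp (measurable_const.prodMk
      ((measurable_subtype_coe.comp measurable_snd).smul (measurable_subtype_coe.comp measurable_fst)))
  calc ∫⁻ v : E n, f (x0, v) ∂volume
      = ∫⁻ v in ({0}ᶜ : Set (E n)), f (x0, v) ∂volume := by
        rw [restrict_compl_singleton]
    _ = ∫⁻ v : ({0}ᶜ : Set (E n)), f (x0, (v : E n)) ∂((volume : Measure (E n)).comap (↑)) :=
        (lintegral_subtype_comap h0 _).symm
    _ = ∫⁻ p : sphere (0 : E n) 1 × Ioi (0:ℝ), f (x0, (p.2 : ℝ) • (p.1 : E n))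
          ∂((volume : Measure (E n)).toSphere.prod (Measure.volumeIoiPow (n - 1))) := by
        rw [← hmp.lintegral_comp hFmeas]
        apply lintegral_congr
        intro a
        have ha : (a : E n) ≠ 0 := a.2
        simp only [homeomorphUnitSphereProd_apply_snd_coe,
          homeomorphUnitSphereProd_apply_fst_coe]
        rw [smul_inv_smul₀ (norm_ne_zero_iff.mpr ha)]
    _ = ∫⁻ ω : sphere (0 : E n) 1, ∫⁻ t : Ioi (0:ℝ), f (x0, (t : ℝ) • (ω : E n))
          ∂(Measure.volumeIoiPow (n - 1)) ∂(volume : Measure (E n)).toSphere :=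
        lintegral_prod _ hFmeas.aemeasurable
    _ = ∫⁻ ω : sphere (0 : E n) 1, ∫⁻ t in Ioi (0:ℝ),
          ENNReal.ofReal (t ^ (n - 1)) * f (x0, t • (ω : E n)) ∂volume
          ∂(volume : Measure (E n)).toSphere := by
        apply lintegral_congr
        intro ω
        rw [Measure.volumeIoiPow]
        rw [lintegral_withDensity_eq_lintegral_mul (Measure.comap Subtype.val volume)
          (f := fun r : Ioi (0:ℝ) => ENNReal.ofReal ((r : ℝ) ^ (n - 1)))
          ((measurable_subtype_coe.pow_const _).ennreal_ofReal)
          (g := fun t : Ioi (0:ℝ) => f (x0, (t : ℝ) • (ω : E n)))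
          (hfmeas.comp (measurable_const.prodMk (measurable_subtype_coe.smul_const _)))]
        simp only [Pi.mul_apply]
        exact lintegral_subtype_comap measurableSet_Ioi
          (fun t : ℝ => ENNReal.ofReal (t ^ (n - 1)) * f (x0, t • (ω : E n)))

/-! ### The key identity -/

lemma key (n : ℕ) (hn : n ≠ 0) (A : Set (ℝ × E n)) (hA : MeasurableSet A) :
    wallMeasure n A = ((n : ℝ≥0∞) + 1) * volume (Cset n A) := by
  set f : ℝ × E n → ℝ≥0∞ := (Cset n A).indicator 1 with hf
  have hfmeas : Measurable f := measurable_const.indicator (measurableSet_Cset n hA)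
  haveI : SigmaFinite ((volume : Measure ℝ).withDensity
      (fun r => ENNReal.ofReal (Real.cosh r ^ (n - 1)))) :=
    SigmaFinite.withDensity_of_ne_top' (fun r => ENNReal.ofReal_ne_top)
  have hPmeas : Measurable ((dSParam n ⁻¹' A).indicator
      (1 : ℝ × sphere (0 : E n) 1 → ℝ≥0∞)) :=
    measurable_const.indicator ((measurable_dSParam n) hA)
  have hL : wallMeasure n A
      = ∫⁻ ω : sphere (0 : E n) 1,
          (∫⁻ r : ℝ, ENNReal.ofReal (Real.cosh r ^ (n - 1))
            * A.indicator 1 (dSParam n (r, ω)) ∂volume)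
          ∂(volume : Measure (E n)).toSphere := by
    rw [wallMeasure, Measure.map_apply (measurable_dSParam n) hA]
    rw [← lintegral_indicator_one ((measurable_dSParam n) hA)]
    rw [lintegral_prod_symm' _ hPmeas]
    apply lintegral_congr
    intro ω
    rw [lintegral_withDensity_eq_lintegral_mul (volume : Measure ℝ)
      (f := fun r : ℝ => ENNReal.ofReal (Real.cosh r ^ (n - 1)))
      ((Real.continuous_cosh.measurable.pow_const _).ennreal_ofReal)
      (g := fun r : ℝ => (dSParam n ⁻¹' A).indicator 1 (r, ω))
      (hPmeas.comp (measurable_id.prodMk measurable_const))]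
    apply lintegral_congr
    intro r
    simp only [Pi.mul_apply]
    have hind : (dSParam n ⁻¹' A).indicator (1 : ℝ × sphere (0 : E n) 1 → ℝ≥0∞) (r, ω)
        = A.indicator 1 (dSParam n (r, ω)) := by
      by_cases hmem : dSParam n (r, ω) ∈ A
      · rw [Set.indicator_of_mem (Set.mem_preimage.mpr hmem), Set.indicator_of_mem hmem]
        rfl
      · rw [Set.indicator_of_notMem hmem,
          Set.indicator_of_notMem (fun h : (r, ω) ∈ dSParam n ⁻¹' A => hmem h)]
    rw [hind]
  have hmid : Measurable (fun q : ℝ × sphere (0 : E n) 1 =>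
      ∫⁻ t in Ioi (0:ℝ), ENNReal.ofReal (t ^ (n - 1)) * f (q.1, t • (q.2 : E n)) ∂volume) := by
    apply Measurable.lintegral_prod_right
    apply Measurable.mul
    · exact (measurable_snd.pow_const _).ennreal_ofReal
    · exact hfmeas.comp ((measurable_fst.fst).prodMk
        (measurable_snd.smul (measurable_subtype_coe.comp (measurable_fst.snd))))
  have hR : volume (Cset n A)
      = ENNReal.ofReal (1 / (n + 1)) *
        ∫⁻ ω : sphere (0 : E n) 1,
          (∫⁻ r : ℝ, ENNReal.ofReal (Real.cosh r ^ (n - 1))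
            * A.indicator 1 (dSParam n (r, ω)) ∂volume)
          ∂(volume : Measure (E n)).toSphere := by
    rw [← lintegral_indicator_one (measurableSet_Cset n hA)]
    rw [Measure.volume_eq_prod ℝ (E n),
      lintegral_prod ((Cset n A).indicator (1 : ℝ × E n → ℝ≥0∞)) hfmeas.aemeasurable]
    calc ∫⁻ x0 : ℝ, ∫⁻ v : E n, f (x0, v) ∂volume ∂volume
        = ∫⁻ x0 : ℝ, ∫⁻ ω : sphere (0 : E n) 1, ∫⁻ t in Ioi (0:ℝ),
            ENNReal.ofReal (t ^ (n - 1)) * f (x0, t • (ω : E n)) ∂volume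
            ∂(volume : Measure (E n)).toSphere ∂volume :=
          lintegral_congr (fun x0 => slice n hn A hA x0)
      _ = ∫⁻ ω : sphere (0 : E n) 1, ∫⁻ x0 : ℝ, ∫⁻ t in Ioi (0:ℝ),
            ENNReal.ofReal (t ^ (n - 1)) * f (x0, t • (ω : E n)) ∂volume ∂volume
            ∂(volume : Measure (E n)).toSphere :=
          lintegral_lintegral_swap hmid.aemeasurable
      _ = ∫⁻ ω : sphere (0 : E n) 1,
            ENNReal.ofReal (1 / (n + 1)) *
              ∫⁻ r : ℝ, ENNReal.ofReal (Real.cosh r ^ (n - 1))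
                * A.indicator 1 (dSParam n (r, ω)) ∂volume
            ∂(volume : Measure (E n)).toSphere :=
          lintegral_congr (fun ω => perOmega n hn A hA ω)
      _ = ENNReal.ofReal (1 / (n + 1)) *
            ∫⁻ ω : sphere (0 : E n) 1,
              (∫⁻ r : ℝ, ENNReal.ofReal (Real.cosh r ^ (n - 1))
                * A.indicator 1 (dSParam n (r, ω)) ∂volume)
              ∂(volume : Measure (E n)).toSphere :=
          lintegral_const_mul' _ _ ENNReal.ofReal_ne_top
  rw [hL, hR, ← mul_assoc]
  have hc : ((n : ℝ≥0∞) + 1) * ENNReal.ofReal (1 / (n + 1)) = 1 := by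
    have h1 : ENNReal.ofReal (1 / ((n:ℝ) + 1)) = ((n : ℝ≥0∞) + 1)⁻¹ := by
      rw [one_div, ENNReal.ofReal_inv_of_pos (by positivity)]
      congr 1
      have : ((n:ℝ) + 1) = ((n + 1 : ℕ) : ℝ) := by push_cast; ring
      rw [this, ENNReal.ofReal_natCast]
      push_cast
      ring
    rw [h1]
    exact ENNReal.mul_inv_cancel (by simp) (by simp)
  rw [hc, one_mul]

end WallAux

/-- The measure `μ` (the pushforward under `Φ(r,ω) = (sinh r, (cosh r)·ω)` of
`(cosh r)^{n-1} dr dω`) is invariant under every linear isometry of the Minkowski form. -/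
theorem wallMeasure_lorentz_invariant (n : ℕ)
    (g : (ℝ × EuclideanSpace ℝ (Fin n)) →ₗ[ℝ] (ℝ × EuclideanSpace ℝ (Fin n)))
    (hg : ∀ x y, minkB (g x) (g y) = minkB x y) :
    Measure.map g (wallMeasure n) = wallMeasure n := by
  rcases eq_or_ne n 0 with hn | hn
  · subst hn
    haveI : IsEmpty (sphere (0 : EuclideanSpace ℝ (Fin 0)) 1) := by
      constructor
      rintro ⟨x, hx⟩
      rw [mem_sphere_zero_iff_norm] at hx
      rw [Subsingleton.elim x 0] at hx
      simp at hx
    have h0 : wallMeasure 0 = 0 := by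
      rw [wallMeasure, Measure.eq_zero_of_isEmpty
        (((volume : Measure ℝ).withDensity
            (fun r => ENNReal.ofReal (Real.cosh r ^ (0 - 1)))).prod
          ((volume : Measure (EuclideanSpace ℝ (Fin 0))).toSphere)), Measure.map_zero]
    rw [h0, Measure.map_zero]
  · have hgc : Continuous g := g.continuous_of_finiteDimensional
    ext s hs
    rw [Measure.map_apply hgc.measurable hs]
    rw [WallAux.key n hn _ (hgc.measurable hs), WallAux.key n hn s hs]
    congr 1
    have hset : WallAux.Cset n (⇑g ⁻¹' s) = ⇑g ⁻¹' (WallAux.Cset n s) := by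
      ext x
      simp only [WallAux.Cset, Set.mem_setOf_eq, Set.mem_preimage]
      have hq : minkB (g x) (g x) = minkB x x := hg x x
      have hnu : WallAux.nuMap n (g x) = g (WallAux.nuMap n x) := by
        unfold WallAux.nuMap
        rw [hq, g.map_smul]
      rw [hq, hnu]
    rw [hset, ← Measure.map_apply hgc.measurable (WallAux.measurableSet_Cset n hs),
      WallAux.map_volume n g hg]

end
end

section
/- If x, y, z ∈ Iⁿ and z lies on the geodesic between x and y, i.e., arcosh(-B(x,z)) + arcosh(-B(z,y)) = arcosh(-B(x,y)), then the separating-wall measure is additive: μ({u : B(x,u)·B(y,u) < 0}) = μ({u : B(x,u)·B(z,u) < 0}) + μ({u : B(z,u)·B(y,u) < 0}). -/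
open MeasureTheory Real Metric

noncomputable section

/-- The inverse hyperbolic cosine, `arcosh x = log (x + √(x² - 1))`. -/
def arcosh (x : ℝ) : ℝ := Real.log (x + Real.sqrt (x ^ 2 - 1))

namespace WallAux

variable {n : ℕ}

lemma minkB_comm (x y : ℝ × EuclideanSpace ℝ (Fin n)) : minkB x y = minkB y x := by
  simp [minkB, real_inner_comm, mul_comm]

lemma minkB_smul_left (c : ℝ) (x y : ℝ × EuclideanSpace ℝ (Fin n)) :
    minkB (c • x) y = c * minkB x y := by
  simp only [minkB, Prod.smul_fst, Prod.smul_snd, smul_eq_mul, real_inner_smul_left]; ring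

lemma minkB_add_left (x x' y : ℝ × EuclideanSpace ℝ (Fin n)) :
    minkB (x + x') y = minkB x y + minkB x' y := by
  simp only [minkB, Prod.fst_add, Prod.snd_add, inner_add_left]; ring

lemma minkB_sub_left (x x' y : ℝ × EuclideanSpace ℝ (Fin n)) :
    minkB (x - x') y = minkB x y - minkB x' y := by
  simp only [minkB, Prod.fst_sub, Prod.snd_sub, inner_sub_left]; ring

lemma minkB_sub_right (x y y' : ℝ × EuclideanSpace ℝ (Fin n)) :
    minkB x (y - y') = minkB x y - minkB x y' := by
  rw [minkB_comm, minkB_sub_left, minkB_comm y x, minkB_comm y' x]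

lemma minkB_add_right (x y y' : ℝ × EuclideanSpace ℝ (Fin n)) :
    minkB x (y + y') = minkB x y + minkB x y' := by
  rw [minkB_comm, minkB_add_left, minkB_comm y x, minkB_comm y' x]

lemma minkB_smul_right (c : ℝ) (x y : ℝ × EuclideanSpace ℝ (Fin n)) :
    minkB x (c • y) = c * minkB x y := by
  rw [minkB_comm, minkB_smul_left, minkB_comm y x]

lemma minkB_zero_left (y : ℝ × EuclideanSpace ℝ (Fin n)) : minkB 0 y = 0 := by
  simp [minkB]

/-- A lightlike vector orthogonal to a timelike (unit) vector vanishes. -/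
lemma eq_zero_of_null_orth (x w : ℝ × EuclideanSpace ℝ (Fin n))
    (hx : minkB x x = -1) (ho : minkB x w = 0) (hw : minkB w w = 0) : w = 0 := by
  have hcs := real_inner_mul_inner_self_le x.2 w.2
  unfold minkB at hx ho hw
  have hc : (inner ℝ x.2 w.2 : ℝ) = x.1 * w.1 := by linarith
  have hxx : (inner ℝ x.2 x.2 : ℝ) = x.1 * x.1 - 1 := by linarith
  have hww : (inner ℝ w.2 w.2 : ℝ) = w.1 * w.1 := by linarith
  rw [hc, hxx, hww] at hcs
  have h1 : w.1 * w.1 ≤ 0 := by nlinarith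
  have hw1 : w.1 = 0 := mul_self_eq_zero.mp (le_antisymm h1 (mul_self_nonneg _))
  have hw2 : w.2 = 0 := by
    have : (inner ℝ w.2 w.2 : ℝ) = 0 := by rw [hww, hw1]; ring
    exact inner_self_eq_zero.mp this
  exact Prod.ext hw1 hw2

lemma one_le_neg_minkB {x y : ℝ × EuclideanSpace ℝ (Fin n)}
    (hx : x ∈ hypI n) (hy : y ∈ hypI n) : 1 ≤ -(minkB x y) := by
  obtain ⟨hxB, hx1⟩ := hx
  obtain ⟨hyB, hy1⟩ := hy
  unfold minkB at *
  have h1 : (inner ℝ x.2 y.2 : ℝ) ≤ ‖x.2‖ * ‖y.2‖ := real_inner_le_norm _ _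
  have h2 : (inner ℝ x.2 x.2 : ℝ) = ‖x.2‖ ^ 2 := real_inner_self_eq_norm_sq x.2
  have h3 : (inner ℝ y.2 y.2 : ℝ) = ‖y.2‖ ^ 2 := real_inner_self_eq_norm_sq y.2
  have hx2 : x.1 ^ 2 = 1 + ‖x.2‖ ^ 2 := by nlinarith
  have hy2 : y.1 ^ 2 = 1 + ‖y.2‖ ^ 2 := by nlinarith
  nlinarith [sq_nonneg (‖x.2‖ - ‖y.2‖), sq_nonneg (x.1 * y.1 - 1 - ‖x.2‖ * ‖y.2‖),
    mul_pos hx1 hy1, norm_nonneg x.2, norm_nonneg y.2,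
    sq_nonneg (x.1 * y.1 + 1 + ‖x.2‖ * ‖y.2‖), sq_nonneg (x.1 - y.1)]

lemma eq_of_neg_minkB_eq_one {x z : ℝ × EuclideanSpace ℝ (Fin n)}
    (hx : x ∈ hypI n) (hz : z ∈ hypI n) (h : -(minkB x z) = 1) : x = z := by
  have hxz : minkB x z = -1 := by linarith
  have hzx : minkB z x = -1 := by rw [minkB_comm]; exact hxz
  have h1 : minkB x (x - z) = 0 := by
    rw [minkB_sub_right, hx.1, hxz]; ring
  have h2 : minkB (x - z) (x - z) = 0 := by
    rw [minkB_sub_left, minkB_sub_right, minkB_sub_right, hx.1, hz.1, hxz, hzx]; ring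
  exact sub_eq_zero.mp (eq_zero_of_null_orth x (x - z) hx.1 h1 h2)

lemma exp_arcosh {t : ℝ} (ht : 1 ≤ t) : Real.exp (_root_.arcosh t) = t + Real.sqrt (t ^ 2 - 1) := by
  apply Real.exp_log
  have := Real.sqrt_nonneg (t ^ 2 - 1)
  linarith

lemma inv_aux {t : ℝ} (ht : 1 ≤ t) : (t + Real.sqrt (t ^ 2 - 1))⁻¹ = t - Real.sqrt (t ^ 2 - 1) := by
  have hq : Real.sqrt (t ^ 2 - 1) ^ 2 = t ^ 2 - 1 := Real.sq_sqrt (by nlinarith)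
  have : (t + Real.sqrt (t ^ 2 - 1)) * (t - Real.sqrt (t ^ 2 - 1)) = 1 := by nlinarith
  exact inv_eq_of_mul_eq_one_right this

lemma cosh_arcosh {t : ℝ} (ht : 1 ≤ t) : Real.cosh (_root_.arcosh t) = t := by
  rw [Real.cosh_eq, Real.exp_neg, exp_arcosh ht, inv_aux ht]; ring

lemma sinh_arcosh {t : ℝ} (ht : 1 ≤ t) : Real.sinh (_root_.arcosh t) = Real.sqrt (t ^ 2 - 1) := by
  rw [Real.sinh_eq, Real.exp_neg, exp_arcosh ht, inv_aux ht]; ring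

lemma cosh_rel {α β γ : ℝ} (hα : 1 ≤ α) (hβ : 1 ≤ β) (hγ : 1 ≤ γ)
    (h : _root_.arcosh α + _root_.arcosh β = _root_.arcosh γ) :
    γ = α * β + Real.sqrt (α ^ 2 - 1) * Real.sqrt (β ^ 2 - 1) := by
  have hc := Real.cosh_add (_root_.arcosh α) (_root_.arcosh β)
  rw [h, cosh_arcosh hγ, cosh_arcosh hα, cosh_arcosh hβ, sinh_arcosh hα, sinh_arcosh hβ] at hc
  exact hc

lemma continuous_minkB (v : ℝ × EuclideanSpace ℝ (Fin n)) :
    Continuous (fun u : ℝ × EuclideanSpace ℝ (Fin n) => minkB v u) := by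
  unfold minkB
  exact ((continuous_const.mul continuous_fst).neg).add
    (Continuous.inner continuous_const continuous_snd)

lemma continuous_dSParam : Continuous (dSParam n) := by
  unfold dSParam; fun_prop

lemma wallMeasure_hyperplane_null (v : ℝ × EuclideanSpace ℝ (Fin n)) (hv : v ∈ hypI n) :
    wallMeasure n {u | minkB v u = 0} = 0 := by
  have hmeas : MeasurableSet {u : ℝ × EuclideanSpace ℝ (Fin n) | minkB v u = 0} :=
    (isClosed_eq (continuous_minkB v) continuous_const).measurableSet
  rw [wallMeasure, Measure.map_apply continuous_dSParam.measurable hmeas]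
  rw [Measure.prod_apply_symm (continuous_dSParam.measurable hmeas)]
  have hzero : ∀ ω : sphere (0 : EuclideanSpace ℝ (Fin n)) 1,
      ((volume : Measure ℝ).withDensity (fun r => ENNReal.ofReal (Real.cosh r ^ (n - 1))))
        ((fun r => (r, ω)) ⁻¹' (dSParam n ⁻¹' {u | minkB v u = 0})) = 0 := by
    intro ω
    have hsub : ((fun r => (r, ω)) ⁻¹' (dSParam n ⁻¹' {u | minkB v u = 0})).Subsingleton := by
      intro r₁ h₁ r₂ h₂
      simp only [Set.mem_preimage, Set.mem_setOf_eq, dSParam, minkB,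
        real_inner_smul_right] at h₁ h₂
      have e₁ : v.1 * Real.sinh r₁
          = Real.cosh r₁ * (inner ℝ v.2 (ω : EuclideanSpace ℝ (Fin n)) : ℝ) := by linarith
      have e₂ : v.1 * Real.sinh r₂
          = Real.cosh r₂ * (inner ℝ v.2 (ω : EuclideanSpace ℝ (Fin n)) : ℝ) := by linarith
      have key : v.1 * (Real.sinh r₁ * Real.cosh r₂ - Real.cosh r₁ * Real.sinh r₂) = 0 := by
        linear_combination Real.cosh r₂ * e₁ - Real.cosh r₁ * e₂
      have h0 : Real.sinh (r₁ - r₂) = 0 := by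
        rw [Real.sinh_sub]
        rcases mul_eq_zero.mp key with h | h
        · exact absurd h (ne_of_gt hv.2)
        · linarith
      have := Real.sinh_eq_zero.mp h0
      linarith
    exact withDensity_absolutelyContinuous _ _ (hsub.measure_zero volume)
  simp only [hzero, lintegral_zero]

/-- The pure sign-combinatorics lemma. -/
lemma sign_aux {f g h s p q : ℝ} (hs : 0 < s) (hp : 0 ≤ p) (hq : 0 ≤ q)
    (hrel : s * g = p * f + q * h) (hf : f ≠ 0) (hg : g ≠ 0) (hh : h ≠ 0) :
    (f * h < 0 ↔ (f * g < 0 ∨ g * h < 0)) ∧ ¬(f * g < 0 ∧ g * h < 0) := by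
  have hg2 : 0 < g * g := mul_self_pos.mpr hg
  have hnb : ¬(f * g < 0 ∧ g * h < 0) := by
    rintro ⟨h1, h2⟩
    have e : s * (g * g) = p * (f * g) + q * (g * h) := by linear_combination g * hrel
    nlinarith [mul_nonpos_of_nonneg_of_nonpos hp h1.le,
      mul_nonpos_of_nonneg_of_nonpos hq h2.le, mul_pos hs hg2]
  refine ⟨⟨?_, ?_⟩, hnb⟩
  · intro hfh
    by_contra hcon
    push_neg at hcon
    obtain ⟨h1, h2⟩ := hcon
    have hfg : 0 < f * g := h1.lt_of_ne (Ne.symm (mul_ne_zero hf hg))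
    have hgh : 0 < g * h := h2.lt_of_ne (Ne.symm (mul_ne_zero hg hh))
    nlinarith [mul_pos hfg hgh, mul_pos hg2 (neg_pos.mpr hfh)]
  · rintro (h1 | h1)
    · have h2 : ¬(g * h < 0) := fun hh2 => hnb ⟨h1, hh2⟩
      have hgh : 0 < g * h := (not_lt.mp h2).lt_of_ne (Ne.symm (mul_ne_zero hg hh))
      nlinarith [mul_neg_of_neg_of_pos h1 hgh, hg2]
    · have h2 : ¬(f * g < 0) := fun hh2 => hnb ⟨hh2, h1⟩
      have hfg : 0 < f * g := (not_lt.mp h2).lt_of_ne (Ne.symm (mul_ne_zero hf hg))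
      nlinarith [mul_neg_of_pos_of_neg hfg h1, hg2]

end WallAux

open WallAux

/-- If `z` lies on the geodesic between `x` and `y` (distances add up), then
the separating-wall measure is additive:
`μ(sep(x,y)) = μ(sep(x,z)) + μ(sep(z,y))`. -/
theorem wallMeasure_separating_additive (n : ℕ)
    (x y z : ℝ × EuclideanSpace ℝ (Fin n))
    (hx : x ∈ hypI n) (hy : y ∈ hypI n) (hz : z ∈ hypI n)
    (hgeo : _root_.arcosh (-(minkB x z)) + _root_.arcosh (-(minkB z y)) = _root_.arcosh (-(minkB x y))) :
    wallMeasure n {u : ℝ × EuclideanSpace ℝ (Fin n) | minkB x u * minkB y u < 0}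
      = wallMeasure n {u : ℝ × EuclideanSpace ℝ (Fin n) | minkB x u * minkB z u < 0}
        + wallMeasure n {u : ℝ × EuclideanSpace ℝ (Fin n) | minkB z u * minkB y u < 0} := by
  classical
  have hα : 1 ≤ -(minkB x z) := one_le_neg_minkB hx hz
  have hβ : 1 ≤ -(minkB z y) := one_le_neg_minkB hz hy
  have hγ : 1 ≤ -(minkB x y) := one_le_neg_minkB hx hy
  set α : ℝ := -(minkB x z) with hαdef
  set β : ℝ := -(minkB z y) with hβdef
  have hγrel := cosh_rel hα hβ hγ hgeo
  set q : ℝ := Real.sqrt (α ^ 2 - 1) with hqdef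
  set p : ℝ := Real.sqrt (β ^ 2 - 1) with hpdef
  have hq0 : 0 ≤ q := Real.sqrt_nonneg _
  have hp0 : 0 ≤ p := Real.sqrt_nonneg _
  have hq2 : q ^ 2 = α ^ 2 - 1 := Real.sq_sqrt (by nlinarith)
  have hp2 : p ^ 2 = β ^ 2 - 1 := Real.sq_sqrt (by nlinarith)
  have hsnn : (0 : ℝ) ≤ q * β + α * p := by nlinarith
  rcases hsnn.eq_or_lt with hs0 | hs
  · -- degenerate case : x = z = y
    have hq : q = 0 := by nlinarith
    have hpz : p = 0 := by nlinarith
    have hα1 : α = 1 := by nlinarith [hq2, hq]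
    have hβ1 : β = 1 := by nlinarith [hp2, hpz]
    have hxz : x = z := eq_of_neg_minkB_eq_one hx hz (by rw [← hαdef]; exact hα1)
    have hzy : z = y := eq_of_neg_minkB_eq_one hz hy (by rw [← hβdef]; exact hβ1)
    subst hxz
    subst hzy
    have hempty : {u : ℝ × EuclideanSpace ℝ (Fin n) | minkB x u * minkB x u < 0} = ∅ :=
      Set.eq_empty_of_forall_notMem fun u (h : minkB x u * minkB x u < 0) =>
        absurd h (not_lt.mpr (mul_self_nonneg _))
    rw [hempty]
    simp
  · -- main case
    have hxB := hx.1
    have hyB := hy.1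
    have hzB := hz.1
    have hxzB : minkB x z = -α := by rw [hαdef]; ring
    have hzyB : minkB z y = -β := by rw [hβdef]; ring
    have hzxB : minkB z x = -α := by rw [minkB_comm]; exact hxzB
    have hyzB : minkB y z = -β := by rw [minkB_comm]; exact hzyB
    have hxyB : minkB x y = -(α * β + q * p) := by rw [← hγrel]; ring
    have hyxB : minkB y x = -(α * β + q * p) := by rw [minkB_comm]; exact hxyB
    set w : ℝ × EuclideanSpace ℝ (Fin n) := p • x + q • y - (q * β + α * p) • z with hwdef
    have hxw : minkB x w = 0 := by
      rw [hwdef, minkB_sub_right, minkB_add_right, minkB_smul_right, minkB_smul_right,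
        minkB_smul_right, hxB, hxyB, hxzB]
      linear_combination (-p) * hq2
    have hww : minkB w w = 0 := by
      rw [hwdef]
      simp only [minkB_sub_left, minkB_sub_right, minkB_add_left, minkB_add_right,
        minkB_smul_left, minkB_smul_right]
      rw [hxB, hyB, hzB, hxyB, hyxB, hxzB, hzxB, hzyB, hyzB]
      linear_combination (-(p ^ 2)) * hq2 + (-(q ^ 2)) * hp2
    have hw0 : w = 0 := eq_zero_of_null_orth x w hxB hxw hww
    have hvec : ∀ u, (q * β + α * p) * minkB z u = p * minkB x u + q * minkB y u := by
      intro u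
      have h0 : minkB w u = 0 := by rw [hw0, minkB_zero_left]
      rw [hwdef, minkB_sub_left, minkB_add_left, minkB_smul_left, minkB_smul_left,
        minkB_smul_left] at h0
      linarith
    -- the null set
    set N : Set (ℝ × EuclideanSpace ℝ (Fin n)) :=
      {u | minkB x u = 0} ∪ {u | minkB z u = 0} ∪ {u | minkB y u = 0} with hNdef
    have hNnull : wallMeasure n N = 0 :=
      measure_union_null
        (measure_union_null (wallMeasure_hyperplane_null x ⟨hxB, hx.2⟩)
          (wallMeasure_hyperplane_null z ⟨hzB, hz.2⟩))
        (wallMeasure_hyperplane_null y ⟨hyB, hy.2⟩)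
    have hclosed : ∀ v : ℝ × EuclideanSpace ℝ (Fin n),
        MeasurableSet {u | minkB v u = 0} := fun v =>
      (isClosed_eq (continuous_minkB v) continuous_const).measurableSet
    have hNmeas : MeasurableSet N := ((hclosed x).union (hclosed z)).union (hclosed y)
    have hmem : ∀ u, u ∉ N → minkB x u ≠ 0 ∧ minkB z u ≠ 0 ∧ minkB y u ≠ 0 := by
      intro u hu
      simp only [hNdef, Set.mem_union, Set.mem_setOf_eq, not_or] at hu
      exact ⟨hu.1.1, hu.1.2, hu.2⟩
    have hsignAll : ∀ u, u ∉ N →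
        (minkB x u * minkB y u < 0 ↔ (minkB x u * minkB z u < 0 ∨ minkB z u * minkB y u < 0))
        ∧ ¬(minkB x u * minkB z u < 0 ∧ minkB z u * minkB y u < 0) := by
      intro u hu
      obtain ⟨hf, hg, hh⟩ := hmem u hu
      exact sign_aux hs hp0 hq0 (hvec u) hf hg hh
    have hmeasSep : ∀ v v' : ℝ × EuclideanSpace ℝ (Fin n),
        MeasurableSet {u | minkB v u * minkB v' u < 0} := fun v v' =>
      (isOpen_lt ((continuous_minkB v).mul (continuous_minkB v')) continuous_const).measurableSet
    have hsplit : {u : ℝ × EuclideanSpace ℝ (Fin n) | minkB x u * minkB y u < 0} \ N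
        = ({u | minkB x u * minkB z u < 0} \ N) ∪ ({u | minkB z u * minkB y u < 0} \ N) := by
      ext u
      simp only [Set.mem_diff, Set.mem_union, Set.mem_setOf_eq]
      by_cases hu : u ∈ N
      · simp [hu]
      · have hiff := (hsignAll u hu).1
        constructor
        · rintro ⟨hlt, -⟩
          rcases hiff.mp hlt with h | h
          · exact Or.inl ⟨h, hu⟩
          · exact Or.inr ⟨h, hu⟩
        · rintro (⟨hlt, -⟩ | ⟨hlt, -⟩)
          · exact ⟨hiff.mpr (Or.inl hlt), hu⟩
          · exact ⟨hiff.mpr (Or.inr hlt), hu⟩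
    have hdisj : Disjoint ({u : ℝ × EuclideanSpace ℝ (Fin n) | minkB x u * minkB z u < 0} \ N)
        ({u : ℝ × EuclideanSpace ℝ (Fin n) | minkB z u * minkB y u < 0} \ N) := by
      rw [Set.disjoint_left]
      rintro u ⟨h1, hu⟩ ⟨h2, -⟩
      exact (hsignAll u hu).2 ⟨h1, h2⟩
    calc wallMeasure n {u : ℝ × EuclideanSpace ℝ (Fin n) | minkB x u * minkB y u < 0}
        = wallMeasure n ({u : ℝ × EuclideanSpace ℝ (Fin n) | minkB x u * minkB y u < 0} \ N) :=
          (measure_diff_null hNnull).symm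
      _ = wallMeasure n (({u : ℝ × EuclideanSpace ℝ (Fin n) | minkB x u * minkB z u < 0} \ N)
            ∪ ({u : ℝ × EuclideanSpace ℝ (Fin n) | minkB z u * minkB y u < 0} \ N)) := by
          rw [hsplit]
      _ = wallMeasure n ({u : ℝ × EuclideanSpace ℝ (Fin n) | minkB x u * minkB z u < 0} \ N)
            + wallMeasure n ({u : ℝ × EuclideanSpace ℝ (Fin n) | minkB z u * minkB y u < 0} \ N) :=
          measure_union hdisj ((hmeasSep z y).diff hNmeas)
      _ = _ := by rw [measure_diff_null hNnull, measure_diff_null hNnull]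

end
end

section
/- The hyperbolic distance is a conditionally negative kernel on Iⁿ: for every n ≥ 2, every finite list of points x₁, …, x_m ∈ Iⁿ, and all real numbers λ₁, …, λ_m with ∑ᵢ λᵢ = 0, one has ∑ᵢ∑ⱼ λᵢλⱼ · arcosh(-B(xᵢ,xⱼ)) ≤ 0. -/
open MeasureTheory Real Metric

noncomputable section

namespace HypCND

abbrev V (n : ℕ) := ℝ × EuclideanSpace ℝ (Fin n)

instance (n : ℕ) : Measure.IsAddHaarMeasure (volume : Measure (V n)) :=
  Measure.prod.instIsAddHaarMeasure _ _

variable {n : ℕ}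

lemma minkB_comm (x y : V n) : minkB x y = minkB y x := by
  simp [minkB, real_inner_comm, mul_comm]

lemma minkB_add_left (x y z : V n) : minkB (x + y) z = minkB x z + minkB y z := by
  simp [minkB, inner_add_left]; ring

lemma minkB_smul_left (c : ℝ) (x z : V n) : minkB (c • x) z = c * minkB x z := by
  simp [minkB, inner_smul_left]; ring

lemma minkB_sub_left (x y z : V n) : minkB (x - y) z = minkB x z - minkB y z := by
  simp [minkB, inner_sub_left]; ring

lemma minkB_add_right (x y z : V n) : minkB x (y + z) = minkB x y + minkB x z := by
  rw [minkB_comm, minkB_add_left, minkB_comm y x, minkB_comm z x]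

lemma minkB_smul_right (c : ℝ) (x z : V n) : minkB x (c • z) = c * minkB x z := by
  rw [minkB_comm, minkB_smul_left, minkB_comm]

lemma minkB_sub_right (x y z : V n) : minkB x (y - z) = minkB x y - minkB x z := by
  rw [minkB_comm, minkB_sub_left, minkB_comm y x, minkB_comm z x]

/-- `minkB · u` as a linear map. -/
def mlin (u : V n) : V n →ₗ[ℝ] ℝ where
  toFun w := minkB w u
  map_add' x y := minkB_add_left x y u
  map_smul' c x := minkB_smul_left c x u

@[simp] lemma mlin_apply (u w : V n) : mlin u w = minkB w u := rfl

/-- Reflection in the hyperplane `minkB`-orthogonal to `u`. -/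
def mref (u : V n) : V n →ₗ[ℝ] V n :=
  LinearMap.id - LinearMap.smulRight ((2 / minkB u u) • mlin u) u

lemma mref_apply (u w : V n) : mref u w = w - ((2 / minkB u u) * minkB w u) • u := rfl

lemma mref_minkB (u : V n) (hu : minkB u u ≠ 0) (w w' : V n) :
    minkB (mref u w) (mref u w') = minkB w w' := by
  simp only [mref_apply, minkB_sub_left, minkB_sub_right, minkB_smul_left, minkB_smul_right]
  field_simp
  ring_nf
  rw [minkB_comm w' u]
  ring

lemma mref_invol (u : V n) (hu : minkB u u ≠ 0) (w : V n) : mref u (mref u w) = w := by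
  rw [mref_apply, mref_apply, minkB_sub_left, minkB_smul_left]
  have : (2 / minkB u u * (minkB w u - 2 / minkB u u * minkB w u * minkB u u)) =
      -(2 / minkB u u * minkB w u) := by field_simp; ring
  rw [this, neg_smul, sub_neg_eq_add]
  abel

lemma mref_det (u : V n) (hu : minkB u u ≠ 0) : |LinearMap.det (mref u)| = 1 := by
  have h : (mref u).comp (mref u) = LinearMap.id :=
    LinearMap.ext fun w => by simpa using mref_invol u hu w
  have := congrArg LinearMap.det h
  rw [LinearMap.det_comp, LinearMap.det_id] at this
  rcases mul_self_eq_one_iff.1 this with h1 | h1 <;> rw [h1] <;> norm_num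

lemma mref_volume (u : V n) (hu : minkB u u ≠ 0) (s : Set (V n)) :
    volume (mref u ⁻¹' s) = volume s := by
  have hd : LinearMap.det (mref u) ≠ 0 := by
    intro h
    have := mref_det u hu
    rw [h] at this; norm_num at this
  rw [Measure.addHaar_preimage_linearMap volume hd s]
  have : |(LinearMap.det (mref u))⁻¹| = 1 := by
    rw [abs_inv, mref_det u hu]; norm_num
  rw [this]; simp

set_option linter.unusedSectionVars false

-- continuity
lemma continuous_minkB_right (x : V n) : Continuous fun w : V n => minkB x w := by
  unfold minkB
  exact ((continuous_const.mul continuous_fst).neg).add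
    (Continuous.inner continuous_const continuous_snd)

lemma continuous_minkB_self : Continuous fun w : V n => minkB w w := by
  unfold minkB
  exact ((continuous_fst.mul continuous_fst).neg).add
    (Continuous.inner continuous_snd continuous_snd)

/-- The separating region of `x` and `y` among "normalized spacelike walls". -/
def Sep (x y : V n) : Set (V n) :=
  {w | 0 < minkB w w ∧ minkB w w ≤ 1 ∧ minkB x w * minkB y w < 0}

lemma measurableSet_sep (x y : V n) : MeasurableSet (Sep x y) := by
  apply MeasurableSet.inter
  · exact measurableSet_lt measurable_const continuous_minkB_self.measurable
  apply MeasurableSet.inter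
  · exact measurableSet_le continuous_minkB_self.measurable measurable_const
  · exact measurableSet_lt (((continuous_minkB_right x).mul (continuous_minkB_right y)).measurable)
      measurable_const

-- _root_.arcosh facts
lemma cosh_arcosh {c : ℝ} (hc : 1 ≤ c) : Real.cosh (_root_.arcosh c) = c := by
  have h1 : 0 ≤ c ^ 2 - 1 := by nlinarith
  have h2 : Real.sqrt (c ^ 2 - 1) ^ 2 = c ^ 2 - 1 := Real.sq_sqrt h1
  have hpos : 0 < c + Real.sqrt (c ^ 2 - 1) := by positivity
  rw [_root_.arcosh, Real.cosh_eq, Real.exp_log hpos, Real.exp_neg, Real.exp_log hpos]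
  have hne : c + Real.sqrt (c ^ 2 - 1) ≠ 0 := ne_of_gt hpos
  field_simp
  nlinarith [h2]

lemma sinh_arcosh {c : ℝ} (hc : 1 ≤ c) : Real.sinh (_root_.arcosh c) = Real.sqrt (c ^ 2 - 1) := by
  have h1 : 0 ≤ c ^ 2 - 1 := by nlinarith
  have h2 : Real.sqrt (c ^ 2 - 1) ^ 2 = c ^ 2 - 1 := Real.sq_sqrt h1
  have hpos : 0 < c + Real.sqrt (c ^ 2 - 1) := by positivity
  rw [_root_.arcosh, Real.sinh_eq, Real.exp_log hpos, Real.exp_neg, Real.exp_log hpos]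
  have hne : c + Real.sqrt (c ^ 2 - 1) ≠ 0 := ne_of_gt hpos
  field_simp
  nlinarith [h2]

lemma arcosh_cosh {t : ℝ} (ht : 0 ≤ t) : _root_.arcosh (Real.cosh t) = t := by
  have h1 : Real.cosh t ^ 2 - 1 = Real.sinh t ^ 2 := by
    have := Real.cosh_sq_sub_sinh_sq t; nlinarith
  have h2 : Real.sqrt (Real.cosh t ^ 2 - 1) = Real.sinh t := by
    rw [h1]
    have h3 : Real.sinh 0 ≤ Real.sinh t := Real.sinh_le_sinh.2 ht
    rw [Real.sinh_zero] at h3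
    exact Real.sqrt_sq h3
  rw [_root_.arcosh, h2, Real.cosh_eq, Real.sinh_eq]
  have : (Real.exp t + Real.exp (-t)) / 2 + (Real.exp t - Real.exp (-t)) / 2 = Real.exp t := by ring
  rw [this, Real.log_exp]

-- standard points on a geodesic
variable [NeZero n]

def pt (n : ℕ) [NeZero n] (t : ℝ) : V n :=
  (Real.cosh t, EuclideanSpace.single (0 : Fin n) (Real.sinh t))

lemma minkB_pt_pt (a b : ℝ) : minkB (pt n a) (pt n b) = -Real.cosh (b - a) := by
  simp [pt, minkB, EuclideanSpace.inner_single_left, EuclideanSpace.single_apply,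
    Real.cosh_sub]
  ring

lemma pt_mem_hypI (t : ℝ) : pt n t ∈ hypI n := by
  constructor
  · have := minkB_pt_pt (n := n) t t
    simpa using this
  · exact Real.cosh_pos (x := t)

lemma pt_ne_zero (t : ℝ) : pt n t ≠ (0 : V n) := by
  intro h
  have : (pt n t).1 = 0 := by rw [h]; rfl
  simp only [pt] at this
  exact (ne_of_gt (Real.cosh_pos (x := t))) this

-- hypI facts
lemma hypI_one_le_fst {x : V n} (hx : x ∈ hypI n) : 1 ≤ x.1 := by
  obtain ⟨h1, h2⟩ := hx
  have : x.1 ^ 2 = 1 + ‖x.2‖ ^ 2 := by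
    have := real_inner_self_eq_norm_sq x.2
    simp only [minkB] at h1
    nlinarith
  nlinarith [sq_nonneg ‖x.2‖]

lemma hypI_norm_sq {x : V n} (hx : x ∈ hypI n) : ‖x.2‖ ^ 2 = x.1 ^ 2 - 1 := by
  obtain ⟨h1, _⟩ := hx
  have := real_inner_self_eq_norm_sq x.2
  simp only [minkB] at h1
  nlinarith

lemma one_le_neg_minkB {x y : V n} (hx : x ∈ hypI n) (hy : y ∈ hypI n) :
    1 ≤ -minkB x y := by
  have hxy : inner ℝ x.2 y.2 ≤ ‖x.2‖ * ‖y.2‖ := real_inner_le_norm x.2 y.2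
  have hx1 := hypI_one_le_fst hx
  have hy1 := hypI_one_le_fst hy
  have hx2 := hypI_norm_sq hx
  have hy2 := hypI_norm_sq hy
  have key : ‖x.2‖ * ‖y.2‖ ≤ x.1 * y.1 - 1 := by
    have h0 : 0 ≤ x.1 * y.1 - 1 := by nlinarith
    have hsq : (‖x.2‖ * ‖y.2‖) ^ 2 ≤ (x.1 * y.1 - 1) ^ 2 := by nlinarith [sq_nonneg (x.1 - y.1)]
    nlinarith [mul_nonneg (norm_nonneg x.2) (norm_nonneg y.2)]
  simp only [minkB]
  nlinarith

lemma volume_sep_mref (u x y : V n) (hu : minkB u u ≠ 0) :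
    volume (Sep (mref u x) (mref u y)) = volume (Sep x y) := by
  have hpre : mref u ⁻¹' (Sep (mref u x) (mref u y)) = Sep x y := by
    ext w
    simp only [Set.mem_preimage, Sep, Set.mem_setOf_eq, mref_minkB u hu]
  rw [← hpre, mref_volume u hu]

lemma mref_swap {a b : V n} (hab : minkB a a = minkB b b)
    (hu : minkB (a - b) (a - b) ≠ 0) : mref (a - b) a = b := by
  have h1 : minkB (a - b) (a - b) = 2 * minkB a (a - b) := by
    simp only [minkB_sub_left, minkB_sub_right]
    rw [minkB_comm b a]
    linarith
  rw [mref_apply]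
  have h2 : (2 / minkB (a - b) (a - b)) * minkB a (a - b) = 1 := by
    rw [h1]
    have : minkB a (a - b) ≠ 0 := by
      intro h; rw [h1, h] at hu; simp at hu
    field_simp
  rw [h2, one_smul, sub_sub_cancel]

lemma minkB_pt_zero (w : V n) : minkB (pt n 0) w = -w.1 := by
  simp [minkB, pt, EuclideanSpace.inner_single_left]

lemma volume_sep_std_fst {y : V n} (hy : y ∈ hypI n) :
    volume (Sep (pt n 0) y) = volume (Sep (pt n 0) (pt n (_root_.arcosh y.1))) := by
  set d := _root_.arcosh y.1 with hd
  by_cases hyd : y = pt n d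
  · rw [← hyd]
  · have hc : 1 ≤ y.1 := hypI_one_le_fst hy
    have hcosh : Real.cosh d = y.1 := HypCND.cosh_arcosh hc
    set u := y - pt n d with hu
    have hu1 : u.1 = 0 := by
      simp only [hu, Prod.fst_sub, pt, hcosh]
      ring
    have huu : minkB u u = ‖u.2‖ ^ 2 := by
      rw [minkB, hu1, real_inner_self_eq_norm_sq]
      ring
    have hune : minkB u u ≠ 0 := by
      rw [huu]
      intro h
      apply hyd
      have h2 : u.2 = 0 := by
        have := norm_eq_zero.1 (pow_eq_zero_iff (n := 2) (by norm_num) |>.1 h)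
        exact this
      have : u = 0 := Prod.ext hu1 h2
      have := sub_eq_zero.1 (hu ▸ this)
      exact this
    have hswap : mref u y = pt n d := by
      apply mref_swap _ hune
      rw [hy.1, (pt_mem_hypI d).1]
    have hfix : mref u (pt n 0) = pt n 0 := by
      rw [mref_apply]
      have : minkB (pt n 0) u = 0 := by
        rw [hu, minkB_sub_right, minkB_pt_zero, minkB_pt_zero]
        simp [pt, hcosh]
      rw [this, mul_zero, zero_smul, sub_zero]
    rw [← volume_sep_mref u (pt n 0) y hune, hfix, hswap]

lemma volume_sep_eq_std {x y : V n} (hx : x ∈ hypI n) (hy : y ∈ hypI n) :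
    volume (Sep x y) = volume (Sep (pt n 0) (pt n (_root_.arcosh (-minkB x y)))) := by
  by_cases hxp : x = pt n 0
  · have h1 : -minkB x y = y.1 := by rw [hxp, minkB_pt_zero]; ring
    rw [h1, hxp]
    exact volume_sep_std_fst hy
  · set u := x - pt n 0 with hu
    have hx1 : 1 < x.1 := by
      rcases lt_or_eq_of_le (hypI_one_le_fst hx) with h | h
      · exact h
      · exfalso
        apply hxp
        have h2 : ‖x.2‖ ^ 2 = 0 := by rw [hypI_norm_sq hx, ← h]; ring
        have h3 : x.2 = 0 := norm_eq_zero.1 (pow_eq_zero_iff (n := 2) (by norm_num) |>.1 h2)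
        have h4 : (pt n 0 : V n) = (1, 0) := by
          unfold pt
          rw [Real.cosh_zero, Real.sinh_zero]
          have : EuclideanSpace.single (0 : Fin n) (0 : ℝ) = 0 := by
            ext j; simp [EuclideanSpace.single_apply]
          rw [this]
        rw [h4]
        exact Prod.ext (h.symm) h3
    have huu : minkB u u = 2 * x.1 - 2 := by
      rw [hu, minkB_sub_left, minkB_sub_right, minkB_sub_right, hx.1]
      rw [minkB_comm x (pt n 0), minkB_pt_zero, minkB_pt_zero]
      simp [pt]
      ring
    have hune : minkB u u ≠ 0 := by rw [huu]; linarith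
    have hswap : mref u x = pt n 0 := by
      apply mref_swap _ hune
      rw [hx.1, (pt_mem_hypI (n := n) 0).1]
    set y' := mref u y with hy'
    have hBy' : minkB (pt n 0) y' = minkB x y := by
      rw [← hswap, hy', mref_minkB u hune]
    have hy'I : y' ∈ hypI n := by
      constructor
      · rw [hy', mref_minkB u hune, hy.1]
      · have h5 : y'.1 = -minkB x y := by rw [← hBy', minkB_pt_zero]; ring
        rw [h5]
        linarith [one_le_neg_minkB hx hy]
    have h5 : y'.1 = -minkB x y := by rw [← hBy', minkB_pt_zero]; ring
    calc volume (Sep x y) = volume (Sep (mref u x) (mref u y)) :=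
          (volume_sep_mref u x y hune).symm
      _ = volume (Sep (pt n 0) y') := by rw [hswap, hy']
      _ = volume (Sep (pt n 0) (pt n (_root_.arcosh (-minkB x y)))) := by
          rw [volume_sep_std_fst hy'I, h5]

lemma volume_hyperplane {x : V n} (hx : x ≠ 0) :
    volume {w : V n | minkB x w = 0} = 0 := by
  have hset : {w : V n | minkB x w = 0} = (LinearMap.ker (mlin x) : Set (V n)) := by
    ext w
    simp [LinearMap.mem_ker, minkB_comm]
  rw [hset]
  apply Measure.addHaar_submodule
  intro h
  have h1 : ((-x.1, x.2) : V n) ∈ LinearMap.ker (mlin x) := h ▸ Submodule.mem_top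
  rw [LinearMap.mem_ker, mlin_apply] at h1
  have h2 : minkB ((-x.1, x.2) : V n) x = x.1 ^ 2 + ‖x.2‖ ^ 2 := by
    rw [minkB, real_inner_self_eq_norm_sq]
    ring
  rw [h2] at h1
  have h3 : x.1 = 0 := by nlinarith [sq_nonneg x.1, sq_nonneg ‖x.2‖]
  have h4 : x.2 = 0 := by
    have : ‖x.2‖ ^ 2 = 0 := by nlinarith [sq_nonneg x.1]
    exact norm_eq_zero.1 (pow_eq_zero_iff (n := 2) (by norm_num) |>.1 this)
  exact hx (Prod.ext h3 h4)

lemma abs_coord_le (v : EuclideanSpace ℝ (Fin n)) : |v 0| ≤ ‖v‖ := by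
  have h := abs_real_inner_le_norm (EuclideanSpace.single (0 : Fin n) (1 : ℝ)) v
  simpa [EuclideanSpace.inner_single_left, EuclideanSpace.norm_single] using h

lemma minkB_pt (t : ℝ) (w : V n) :
    minkB (pt n t) w = -(Real.cosh t * w.1) + Real.sinh t * w.2 0 := by
  simp [minkB, pt, EuclideanSpace.inner_single_left]

lemma minkB_self_eq (w : V n) : minkB w w = -w.1 ^ 2 + ‖w.2‖ ^ 2 := by
  rw [minkB, real_inner_self_eq_norm_sq]
  ring

lemma sep_subset_ball {t : ℝ} (ht : 0 ≤ t) :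
    Sep (pt n 0) (pt n t) ⊆ Metric.closedBall (0 : V n) (Real.cosh t) := by
  intro w hw
  obtain ⟨h1, h2, h3⟩ := hw
  rw [minkB_pt_zero, minkB_pt] at h3
  rw [minkB_self_eq] at h1 h2
  set A := w.1
  set C := w.2 0
  have hC : |C| ≤ ‖w.2‖ := abs_coord_le w.2
  have hs : 0 ≤ Real.sinh t := by
    have := Real.sinh_le_sinh.2 ht
    rwa [Real.sinh_zero] at this
  have hcosh : 1 ≤ Real.cosh t := Real.one_le_cosh t
  -- h3 : -A * (-(cosh t * A) + sinh t * C) < 0, i.e. cosh t * A^2 < sinh t * A * C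
  have h3' : Real.cosh t * A ^ 2 < Real.sinh t * (A * C) := by nlinarith [h3]
  have hA0 : A ≠ 0 := by
    intro h
    rw [h] at h3'
    simp at h3' 
  have hAC : Real.sinh t * (A * C) ≤ Real.sinh t * (|A| * ‖w.2‖) := by
    apply mul_le_mul_of_nonneg_left _ hs
    calc A * C ≤ |A * C| := le_abs_self _
      _ = |A| * |C| := abs_mul A C
      _ ≤ |A| * ‖w.2‖ := by
          apply mul_le_mul_of_nonneg_left hC (abs_nonneg A)
  have hnn : ‖w.2‖ ^ 2 ≤ 1 + A ^ 2 := by nlinarith [h2]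
  -- cosh t * A^2 < sinh t * |A| * ‖w.2‖; square it
  have hA2 : A ^ 2 < Real.sinh t ^ 2 := by
    have habs : Real.cosh t * A ^ 2 < Real.sinh t * (|A| * ‖w.2‖) := lt_of_lt_of_le h3' hAC
    have hA2pos : 0 < A ^ 2 := by positivity
    have hsq : (Real.cosh t * A ^ 2) * (Real.cosh t * A ^ 2)
        < (Real.sinh t * (|A| * ‖w.2‖)) * (Real.sinh t * (|A| * ‖w.2‖)) :=
      mul_self_lt_mul_self (by positivity) habs
    have h6 : Real.sinh t ^ 2 * A ^ 2 * ‖w.2‖ ^ 2 ≤ Real.sinh t ^ 2 * A ^ 2 * (1 + A ^ 2) := by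
      nlinarith [sq_nonneg (Real.sinh t * A)]
    have hcsq := Real.cosh_sq t
    have h7 : Real.cosh t ^ 2 * (A ^ 2) ^ 2 < Real.sinh t ^ 2 * (A ^ 2 * ‖w.2‖ ^ 2) := by
      have e1 : Real.cosh t * A ^ 2 * (Real.cosh t * A ^ 2)
          = Real.cosh t ^ 2 * (A ^ 2) ^ 2 := by ring
      have e2 : Real.sinh t * (|A| * ‖w.2‖) * (Real.sinh t * (|A| * ‖w.2‖))
          = Real.sinh t ^ 2 * (|A| ^ 2 * ‖w.2‖ ^ 2) := by ring
      rw [e1, e2, sq_abs] at hsq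
      exact hsq
    nlinarith [h6, h7, hcsq, hA2pos, mul_pos hA2pos hA2pos]
  have hw2 : ‖w.2‖ ^ 2 ≤ Real.cosh t ^ 2 := by
    have := Real.cosh_sq t
    nlinarith
  rw [mem_closedBall_zero_iff, Prod.norm_def]
  apply max_le
  · have : |A| ≤ Real.cosh t := by
      have hsc : Real.sinh t ≤ Real.cosh t := by
        have he : Real.cosh t - Real.sinh t = Real.exp (-t) := by
          rw [Real.cosh_eq, Real.sinh_eq]; ring
        linarith [Real.exp_pos (-t)]
      rw [abs_le]
      constructor <;> nlinarith [sq_abs A, abs_nonneg A]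
    simpa using this
  · have : ‖w.2‖ ≤ Real.cosh t := by nlinarith [norm_nonneg w.2]
    simpa using this

/-- The measure of the set of walls separating standard points at distance `t`. -/
def Gm (n : ℕ) [NeZero n] (t : ℝ) : ENNReal := volume (Sep (pt n 0) (pt n t))

lemma Gm_lt_top {t : ℝ} (ht : 0 ≤ t) : Gm n t < ⊤ :=
  lt_of_le_of_lt (measure_mono (sep_subset_ball ht))
    (isCompact_closedBall _ _).measure_lt_top

lemma sep_self (x : V n) : Sep x x = ∅ := by
  rw [Set.eq_empty_iff_forall_notMem]
  intro w hw
  nlinarith [hw.2.2, mul_self_nonneg (minkB x w)]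

lemma Gm_zero : Gm n 0 = 0 := by
  unfold Gm
  rw [sep_self, measure_empty]

lemma sep_disjoint {a s : ℝ} (ha : 0 ≤ a) (has : a ≤ s) :
    Disjoint (Sep (pt n 0) (pt n a)) (Sep (pt n a) (pt n s)) := by
  rw [Set.disjoint_left]
  rintro w ⟨_, _, h1⟩ ⟨_, _, h2⟩
  rw [minkB_pt_zero] at h1
  rcases eq_or_lt_of_le (ha.trans has) with hs0 | hs0
  · -- s = 0 hence a = 0
    have ha0 : a = 0 := le_antisymm (has.trans hs0.symm.le) ha
    rw [ha0, minkB_pt] at h1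
    simp [Real.cosh_zero, Real.sinh_zero] at h1
    nlinarith [h1]
  · set P := minkB (pt n a) w
    set Q := minkB (pt n s) w
    have hAP : 0 < w.1 * P := by nlinarith [h1]
    have hQP : Q * P < 0 := by nlinarith [h2]
    have hsa : 0 ≤ Real.sinh (s - a) := by
      have := Real.sinh_le_sinh.2 (sub_nonneg.2 has)
      rwa [Real.sinh_zero] at this
    have hiden : (Real.sinh a * Q - Real.sinh s * P) * P
        = Real.sinh (s - a) * (w.1 * P) := by
      have hP : P = -(Real.cosh a * w.1) + Real.sinh a * w.2 0 := minkB_pt a w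
      have hQ : Q = -(Real.cosh s * w.1) + Real.sinh s * w.2 0 := minkB_pt s w
      rw [Real.sinh_sub, hP, hQ]
      ring
    have hkey : 0 ≤ Real.sinh a * (Q * P) - Real.sinh s * P ^ 2 := by nlinarith [hiden]
    have hsinha : 0 ≤ Real.sinh a := by
      have := Real.sinh_le_sinh.2 ha
      rwa [Real.sinh_zero] at this
    have hsinhs : 0 < Real.sinh s := by
      have := Real.sinh_lt_sinh.2 hs0
      rwa [Real.sinh_zero] at this
    have hP2 : 0 < P ^ 2 := by
      have : P ≠ 0 := by intro h; rw [h] at hAP; simp at hAP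
      positivity
    nlinarith [mul_nonpos_of_nonneg_of_nonpos hsinha hQP.le]

lemma volume_sep_split {a b : ℝ} (ha : 0 ≤ a) (hb : 0 ≤ b) :
    volume (Sep (pt n 0) (pt n (a + b))) =
      volume (Sep (pt n 0) (pt n a)) + volume (Sep (pt n a) (pt n (a + b))) := by
  set As := Sep (pt n 0) (pt n a) with hAs
  set Bs := Sep (pt n a) (pt n (a + b)) with hBs
  set Cs := Sep (pt n 0) (pt n (a + b)) with hCs
  have hdisj : Disjoint As Bs := sep_disjoint ha (by linarith)
  have hNa : volume {w : V n | minkB (pt n a) w = 0} = 0 :=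
    volume_hyperplane (pt_ne_zero a)
  have hN0 : volume {w : V n | minkB (pt n 0) w = 0} = 0 :=
    volume_hyperplane (pt_ne_zero 0)
  have hNab : volume {w : V n | minkB (pt n (a + b)) w = 0} = 0 :=
    volume_hyperplane (pt_ne_zero (a + b))
  have hsub1 : Cs ⊆ (As ∪ Bs) ∪ {w : V n | minkB (pt n a) w = 0} := by
    rintro w ⟨hq1, hq2, h3⟩
    by_cases hla : minkB (pt n a) w = 0
    · exact Or.inr hla
    · left
      rcases lt_trichotomy (minkB (pt n 0) w * minkB (pt n a) w) 0 with h | h | h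
      · exact Or.inl ⟨hq1, hq2, h⟩
      · exfalso
        have h0 : minkB (pt n 0) w ≠ 0 := by
          intro hz; rw [hz, zero_mul] at h3; exact lt_irrefl 0 h3
        rcases mul_eq_zero.1 h with hz | hz
        · exact h0 hz
        · exact hla hz
      · right
        refine ⟨hq1, hq2, ?_⟩
        have h0sq : 0 < (minkB (pt n 0) w) ^ 2 := by
          have h0 : minkB (pt n 0) w ≠ 0 := by
            intro hz; rw [hz, zero_mul] at h3; exact lt_irrefl 0 h3
          positivity
        nlinarith [h3, h]
  have hsub2 : As ∪ Bs ⊆ Cs ∪ ({w : V n | minkB (pt n 0) w = 0}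
      ∪ {w : V n | minkB (pt n (a + b)) w = 0}) := by
    rintro w (⟨hq1, hq2, h3⟩ | ⟨hq1, hq2, h3⟩)
    · by_cases hlab : minkB (pt n (a + b)) w = 0
      · exact Or.inr (Or.inr hlab)
      · rcases lt_trichotomy (minkB (pt n 0) w * minkB (pt n (a + b)) w) 0 with h | h | h
        · exact Or.inl ⟨hq1, hq2, h⟩
        · exfalso
          have h0 : minkB (pt n 0) w ≠ 0 := by
            intro hz; rw [hz, zero_mul] at h3; exact lt_irrefl 0 h3
          rcases mul_eq_zero.1 h with hz | hz
          · exact h0 hz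
          · exact hlab hz
        · exfalso
          have h0sq : 0 < (minkB (pt n 0) w) ^ 2 := by
            have h0 : minkB (pt n 0) w ≠ 0 := by
              intro hz; rw [hz, zero_mul] at h3; exact lt_irrefl 0 h3
            positivity
          have hinBs : w ∈ Bs := by
            refine ⟨hq1, hq2, ?_⟩
            nlinarith [h3, h]
          exact Set.disjoint_left.1 hdisj ⟨hq1, hq2, h3⟩ hinBs
    · by_cases hl0 : minkB (pt n 0) w = 0
      · exact Or.inr (Or.inl hl0)
      · rcases lt_trichotomy (minkB (pt n 0) w * minkB (pt n (a + b)) w) 0 with h | h | h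
        · exact Or.inl ⟨hq1, hq2, h⟩
        · exfalso
          have hab0 : minkB (pt n (a + b)) w ≠ 0 := by
            intro hz; rw [hz, mul_zero] at h3; exact lt_irrefl 0 h3
          rcases mul_eq_zero.1 h with hz | hz
          · exact hl0 hz
          · exact hab0 hz
        · exfalso
          have habsq : 0 < (minkB (pt n (a + b)) w) ^ 2 := by
            have hab0 : minkB (pt n (a + b)) w ≠ 0 := by
              intro hz; rw [hz, mul_zero] at h3; exact lt_irrefl 0 h3
            positivity
          have hinAs : w ∈ As := by
            refine ⟨hq1, hq2, ?_⟩
            nlinarith [h3, h]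
          exact Set.disjoint_left.1 hdisj hinAs ⟨hq1, hq2, h3⟩
  apply le_antisymm
  · calc volume Cs ≤ volume ((As ∪ Bs) ∪ {w : V n | minkB (pt n a) w = 0}) :=
          measure_mono hsub1
      _ ≤ volume (As ∪ Bs) + volume {w : V n | minkB (pt n a) w = 0} := measure_union_le _ _
      _ = volume (As ∪ Bs) := by rw [hNa, add_zero]
      _ = volume As + volume Bs :=
          measure_union hdisj (measurableSet_sep _ _)
  · calc volume As + volume Bs = volume (As ∪ Bs) :=
          (measure_union hdisj (measurableSet_sep _ _)).symm
      _ ≤ volume (Cs ∪ ({w : V n | minkB (pt n 0) w = 0}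
            ∪ {w : V n | minkB (pt n (a + b)) w = 0})) := measure_mono hsub2
      _ ≤ volume Cs + volume ({w : V n | minkB (pt n 0) w = 0}
            ∪ {w : V n | minkB (pt n (a + b)) w = 0}) := measure_union_le _ _
      _ = volume Cs := by
          rw [measure_union_null hN0 hNab, add_zero]

lemma Gm_add {a b : ℝ} (ha : 0 ≤ a) (hb : 0 ≤ b) :
    Gm n (a + b) = Gm n a + Gm n b := by
  unfold Gm
  rw [volume_sep_split ha hb]
  congr 1
  have h1 : -minkB (pt n a) (pt n (a + b)) = Real.cosh b := by
    rw [minkB_pt_pt]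
    simp
  rw [volume_sep_eq_std (pt_mem_hypI a) (pt_mem_hypI (a + b)), h1, HypCND.arcosh_cosh hb]

lemma Gm_one_pos : 0 < Gm n 1 := by
  have hO : IsOpen {w : V n | 0 < minkB w w ∧ minkB w w < 1
      ∧ minkB (pt n 0) w * minkB (pt n 1) w < 0} := by
    have h1 : IsOpen {w : V n | 0 < minkB w w} :=
      isOpen_lt continuous_const continuous_minkB_self
    have h2 : IsOpen {w : V n | minkB w w < 1} :=
      isOpen_lt continuous_minkB_self continuous_const
    have h3 : IsOpen {w : V n | minkB (pt n 0) w * minkB (pt n 1) w < 0} :=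
      isOpen_lt ((continuous_minkB_right _).mul (continuous_minkB_right _)) continuous_const
    exact h1.inter (h2.inter h3)
  set w : V n := (Real.sinh (1/2) / 2, EuclideanSpace.single (0 : Fin n) (Real.cosh (1/2) / 2))
    with hw
  have hsinh : 0 < Real.sinh (1/2) := by
    have := Real.sinh_lt_sinh.2 (by norm_num : (0:ℝ) < 1/2)
    rwa [Real.sinh_zero] at this
  have hq : minkB w w = 1/4 := by
    rw [minkB_self_eq]
    have h1 : ‖(EuclideanSpace.single (0 : Fin n) (Real.cosh (1/2) / 2))‖
        = |Real.cosh (1/2) / 2| := EuclideanSpace.norm_single _ _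
    have h2 : (0:ℝ) < Real.cosh (1/2) / 2 := by positivity
    have hcsq := Real.cosh_sq (1/2 : ℝ)
    rw [hw]
    simp only []
    rw [h1, abs_of_pos h2]
    nlinarith [hcsq]
  have hw0 : w.2 0 = Real.cosh (1/2) / 2 := by
    rw [hw]
    simp [EuclideanSpace.single_apply]
  have hmem : w ∈ {w : V n | 0 < minkB w w ∧ minkB w w < 1
      ∧ minkB (pt n 0) w * minkB (pt n 1) w < 0} := by
    refine ⟨by rw [hq]; norm_num, by rw [hq]; norm_num, ?_⟩
    rw [minkB_pt_zero, minkB_pt, hw0]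
    have hw1 : w.1 = Real.sinh (1/2) / 2 := rfl
    rw [hw1]
    have hid : Real.sinh 1 * Real.cosh (1/2) - Real.cosh 1 * Real.sinh (1/2)
        = Real.sinh (1/2) := by
      have := Real.sinh_sub (1 : ℝ) (1/2)
      norm_num at this
      linarith [this]
    nlinarith [hsinh, hid]
  have hsub : {w : V n | 0 < minkB w w ∧ minkB w w < 1
      ∧ minkB (pt n 0) w * minkB (pt n 1) w < 0} ⊆ Sep (pt n 0) (pt n 1) :=
    fun w hw => ⟨hw.1, le_of_lt hw.2.1, hw.2.2⟩
  exact lt_of_lt_of_le (hO.measure_pos volume ⟨w, hmem⟩) (measure_mono hsub)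

/-- Real-valued version of `Gm`. -/
def g (n : ℕ) [NeZero n] (t : ℝ) : ℝ := (Gm n t).toReal

lemma g_nonneg (t : ℝ) : 0 ≤ g n t := ENNReal.toReal_nonneg

lemma g_zero : g n 0 = 0 := by unfold g; rw [Gm_zero]; rfl

lemma g_add {a b : ℝ} (ha : 0 ≤ a) (hb : 0 ≤ b) : g n (a + b) = g n a + g n b := by
  unfold g
  rw [Gm_add ha hb, ENNReal.toReal_add (Gm_lt_top ha).ne (Gm_lt_top hb).ne]

lemma g_one_pos : 0 < g n 1 :=
  ENNReal.toReal_pos (Gm_one_pos (n := n)).ne' (Gm_lt_top zero_le_one).ne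

lemma g_mono {a b : ℝ} (ha : 0 ≤ a) (hab : a ≤ b) : g n a ≤ g n b := by
  have h1 : g n b = g n a + g n (b - a) := by
    have : a + (b - a) = b := by ring
    rw [← this, g_add ha (by linarith)]
    ring_nf
  linarith [g_nonneg (n := n) (b - a)]

lemma g_nat (k : ℕ) {t : ℝ} (ht : 0 ≤ t) : g n (k * t) = k * g n t := by
  induction k with
  | zero => simp [g_zero]
  | succ k ih =>
      have h1 : ((k : ℝ) + 1) * t = k * t + t := by ring
      push_cast
      rw [h1, g_add (by positivity) ht, ih]
      ring

lemma g_lin {t : ℝ} (ht : 0 ≤ t) : g n t = t * g n 1 := by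
  have key : ∀ k : ℕ, 0 < k → |g n t - t * g n 1| ≤ 2 * g n 1 / k := by
    intro k hk
    have hk' : (0:ℝ) < k := by exact_mod_cast hk
    have hgk : g n (1 / k) = g n 1 / k := by
      have h1 : (k:ℝ) * (1 / k) = 1 := by field_simp
      have h2 := g_nat (n := n) k (t := 1/k) (by positivity)
      rw [h1] at h2
      field_simp [h2]
      linarith [h2]
    set m := Nat.floor (k * t) with hm
    have hml : (m : ℝ) ≤ k * t := Nat.floor_le (by positivity)
    have hmu : k * t < m + 1 := Nat.lt_floor_add_one _
    have h2 : g n ((m : ℝ) * (1/k)) = m * (g n 1 / k) := by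
      rw [g_nat m (by positivity), hgk]
    have h3 : g n (((m : ℝ) + 1) * (1/k)) = ((m : ℝ) + 1) * (g n 1 / k) := by
      have h4 := g_nat (n := n) (m + 1) (t := 1/k) (by positivity)
      push_cast at h4
      rw [h4, hgk]
    have hlow : g n ((m : ℝ) * (1/k)) ≤ g n t := by
      apply g_mono (by positivity)
      rw [div_eq_mul_inv, ← mul_assoc, mul_one]
      calc (m : ℝ) * (k : ℝ)⁻¹ ≤ (k * t) * (k:ℝ)⁻¹ := by
            apply mul_le_mul_of_nonneg_right hml (by positivity)
        _ = t := by field_simp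
    have hhigh : g n t ≤ g n (((m : ℝ) + 1) * (1/k)) := by
      apply g_mono ht
      rw [div_eq_mul_inv, ← mul_assoc, mul_one]
      calc t = (k * t) * (k:ℝ)⁻¹ := by field_simp
        _ ≤ ((m : ℝ) + 1) * (k:ℝ)⁻¹ := by
            apply mul_le_mul_of_nonneg_right hmu.le (by positivity)
    rw [h2] at hlow
    rw [h3] at hhigh
    have hg1 : 0 ≤ g n 1 := g_nonneg 1
    have ht1 : t * g n 1 ≤ ((m:ℝ) + 1) / k * g n 1 := by
      apply mul_le_mul_of_nonneg_right _ hg1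
      rw [div_eq_mul_inv]
      calc t = (k * t) * (k:ℝ)⁻¹ := by field_simp
        _ ≤ ((m : ℝ) + 1) * (k:ℝ)⁻¹ := mul_le_mul_of_nonneg_right hmu.le (by positivity)
    have ht2 : (m:ℝ) / k * g n 1 ≤ t * g n 1 := by
      apply mul_le_mul_of_nonneg_right _ hg1
      rw [div_eq_mul_inv]
      calc (m : ℝ) * (k : ℝ)⁻¹ ≤ (k * t) * (k:ℝ)⁻¹ :=
            mul_le_mul_of_nonneg_right hml (by positivity)
        _ = t := by field_simp
    rw [abs_le]
    constructor
    · have e1 : (m:ℝ) * (g n 1 / k) = (m:ℝ)/k * g n 1 := by ring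
      rw [e1] at hlow
      have hthis : ((m:ℝ)+1)/k * g n 1 - (m:ℝ)/k * g n 1 = g n 1 / k := by field_simp; ring
      have h8 : 2 * g n 1 / k = 2 * (g n 1 / k) := by ring
      linarith [hlow, ht1, div_nonneg hg1 hk'.le]
    · have e2 : ((m:ℝ) + 1) * (g n 1 / k) = ((m:ℝ)+1)/k * g n 1 := by ring
      rw [e2] at hhigh
      have hthis : ((m:ℝ)+1)/k * g n 1 - (m:ℝ)/k * g n 1 = g n 1 / k := by field_simp; ring
      have h8 : 2 * g n 1 / k = 2 * (g n 1 / k) := by ring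
      linarith [hhigh, ht2, div_nonneg hg1 hk'.le]
  have habs : |g n t - t * g n 1| ≤ 0 := by
    apply le_of_forall_pos_le_add
    intro ε hε
    obtain ⟨k, hk⟩ := exists_nat_gt (2 * g n 1 / ε)
    have hkpos : 0 < k := by
      by_contra h
      push_neg at h
      interval_cases k
      simp only [Nat.cast_zero] at hk
      have : (0:ℝ) ≤ 2 * g n 1 / ε := div_nonneg (by linarith [g_nonneg (n := n) 1]) hε.le
      linarith
    have h5 : 2 * g n 1 / k < ε := by
      rw [div_lt_iff₀ (by exact_mod_cast hkpos)]
      have h6 : 2 * g n 1 / ε < k := hk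
      rw [div_lt_iff₀ hε] at h6
      linarith
    linarith [key k hkpos]
  have : g n t - t * g n 1 = 0 := abs_eq_zero.1 (le_antisymm habs (abs_nonneg _))
  linarith

lemma arcosh_nonneg {c : ℝ} (hc : 1 ≤ c) : 0 ≤ _root_.arcosh c :=
  Real.log_nonneg (by nlinarith [Real.sqrt_nonneg (c ^ 2 - 1)])

/-- The "half-space side" set of a point. -/
def Sside (x : V n) : Set (V n) :=
  {w | 0 < minkB w w ∧ minkB w w ≤ 1 ∧ minkB x w < 0}

lemma measurableSet_sside (x : V n) : MeasurableSet (Sside x) := by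
  apply MeasurableSet.inter
  · exact measurableSet_lt measurable_const continuous_minkB_self.measurable
  apply MeasurableSet.inter
  · exact measurableSet_le continuous_minkB_self.measurable measurable_const
  · exact measurableSet_lt (continuous_minkB_right x).measurable measurable_const

lemma volume_sdiff_eq_sep {x y : V n} (hx0 : x ≠ 0) (hy0 : y ≠ 0) :
    volume ((Sside x \ Sside y) ∪ (Sside y \ Sside x)) = volume (Sep x y) := by
  have hNx : volume {w : V n | minkB x w = 0} = 0 := volume_hyperplane hx0
  have hNy : volume {w : V n | minkB y w = 0} = 0 := volume_hyperplane hy0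
  set T := (Sside x \ Sside y) ∪ (Sside y \ Sside x) with hT
  have hTmeas : MeasurableSet T :=
    (((measurableSet_sside x).diff (measurableSet_sside y)).union
      ((measurableSet_sside y).diff (measurableSet_sside x)))
  have hsub1 : Sep x y ⊆ T ∪ ({w : V n | minkB x w = 0} ∪ {w : V n | minkB y w = 0}) := by
    rintro w ⟨hq1, hq2, h3⟩
    rcases lt_trichotomy (minkB x w) 0 with hxw | hxw | hxw
    · rcases lt_trichotomy (minkB y w) 0 with hyw | hyw | hyw
      · exfalso; nlinarith [mul_pos_of_neg_of_neg hxw hyw]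
      · exact Or.inr (Or.inr hyw)
      · left
        left
        exact ⟨⟨hq1, hq2, hxw⟩, fun hmem => by linarith [hmem.2.2]⟩
    · exact Or.inr (Or.inl hxw)
    · rcases lt_trichotomy (minkB y w) 0 with hyw | hyw | hyw
      · left
        right
        exact ⟨⟨hq1, hq2, hyw⟩, fun hmem => by linarith [hmem.2.2]⟩
      · exact Or.inr (Or.inr hyw)
      · exfalso; nlinarith [mul_pos hxw hyw]
  have hsub2 : T ⊆ Sep x y ∪ ({w : V n | minkB x w = 0} ∪ {w : V n | minkB y w = 0}) := by
    rintro w (⟨⟨hq1, hq2, hxw⟩, hnot⟩ | ⟨⟨hq1, hq2, hyw⟩, hnot⟩)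
    · rcases lt_trichotomy (minkB y w) 0 with hyw | hyw | hyw
      · exact absurd ⟨hq1, hq2, hyw⟩ hnot
      · exact Or.inr (Or.inr hyw)
      · exact Or.inl ⟨hq1, hq2, mul_neg_of_neg_of_pos hxw hyw⟩
    · rcases lt_trichotomy (minkB x w) 0 with hxw | hxw | hxw
      · exact absurd ⟨hq1, hq2, hxw⟩ hnot
      · exact Or.inr (Or.inl hxw)
      · exact Or.inl ⟨hq1, hq2, mul_neg_of_pos_of_neg hxw hyw⟩
  have hN : volume ({w : V n | minkB x w = 0} ∪ {w : V n | minkB y w = 0}) = 0 :=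
    measure_union_null hNx hNy
  apply le_antisymm
  · calc volume T ≤ volume (Sep x y ∪ ({w : V n | minkB x w = 0}
          ∪ {w : V n | minkB y w = 0})) := measure_mono hsub2
      _ ≤ volume (Sep x y) + volume ({w : V n | minkB x w = 0}
          ∪ {w : V n | minkB y w = 0}) := measure_union_le _ _
      _ = volume (Sep x y) := by rw [hN, add_zero]
  · calc volume (Sep x y) ≤ volume (T ∪ ({w : V n | minkB x w = 0}
          ∪ {w : V n | minkB y w = 0})) := measure_mono hsub1
      _ ≤ volume T + volume ({w : V n | minkB x w = 0}
          ∪ {w : V n | minkB y w = 0}) := measure_union_le _ _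
      _ = volume T := by rw [hN, add_zero]

lemma volume_sep_toReal {x y : V n} (hx : x ∈ hypI n) (hy : y ∈ hypI n) :
    (volume (Sep x y)).toReal = _root_.arcosh (-minkB x y) * g n 1 := by
  rw [volume_sep_eq_std hx hy]
  have hd : 0 ≤ _root_.arcosh (-minkB x y) := HypCND.arcosh_nonneg (one_le_neg_minkB hx hy)
  exact g_lin hd

lemma volume_sep_lt_top {x y : V n} (hx : x ∈ hypI n) (hy : y ∈ hypI n) :
    volume (Sep x y) < ⊤ := by
  rw [volume_sep_eq_std hx hy]
  exact Gm_lt_top (HypCND.arcosh_nonneg (one_le_neg_minkB hx hy))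

end HypCND

open HypCND in
/-- The hyperbolic distance `d(x,y) = _root_.arcosh(-B(x,y))` is a conditionally
negative kernel on `Iⁿ` for every `n ≥ 2`. -/
theorem hyperbolic_dist_conditionally_negative (n : ℕ) (hn : 2 ≤ n)
    (m : ℕ) (x : Fin m → ℝ × EuclideanSpace ℝ (Fin n)) (hx : ∀ i, x i ∈ hypI n)
    (lam : Fin m → ℝ) (hlam : ∑ i, lam i = 0) :
    ∑ i, ∑ j, lam i * lam j * _root_.arcosh (-(minkB (x i) (x j))) ≤ 0 := by
  classical
  haveI : NeZero n := ⟨by omega⟩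
  set S : Fin m → Set (V n) := fun i => Sside (x i) with hS
  set T : Fin m → Fin m → Set (V n) := fun i j => (S i \ S j) ∪ (S j \ S i) with hTdef
  have hxne : ∀ i, x i ≠ 0 := by
    intro i h
    have h2 := (hx i).2
    rw [h] at h2
    simp at h2
  have hTmeas : ∀ i j, MeasurableSet (T i j) := fun i j =>
    ((measurableSet_sside _).diff (measurableSet_sside _)).union
      ((measurableSet_sside _).diff (measurableSet_sside _))
  have hTvol : ∀ i j, volume (T i j) = volume (Sep (x i) (x j)) := fun i j =>
    volume_sdiff_eq_sep (hxne i) (hxne j)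
  have hTfin : ∀ i j, volume (T i j) < ⊤ := by
    intro i j
    rw [hTvol i j]
    exact volume_sep_lt_top (hx i) (hx j)
  have hTtoReal : ∀ i j, (volume (T i j)).toReal
      = _root_.arcosh (-(minkB (x i) (x j))) * g n 1 := by
    intro i j
    rw [hTvol i j]
    exact volume_sep_toReal (hx i) (hx j)
  set U : Set (V n) := ⋃ i, ⋃ j, T i j with hU
  have hUmeas : MeasurableSet U :=
    MeasurableSet.iUnion fun i => MeasurableSet.iUnion fun j => hTmeas i j
  have hUfin : volume U < ⊤ := by
    refine lt_of_le_of_lt (measure_iUnion_le _) ?_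
    rw [tsum_fintype]
    refine ENNReal.sum_lt_top.2 fun i _ => ?_
    refine lt_of_le_of_lt (measure_iUnion_le _) ?_
    rw [tsum_fintype]
    exact ENNReal.sum_lt_top.2 fun j _ => hTfin i j
  have hTU : ∀ i j, T i j ⊆ U := fun i j =>
    Set.subset_iUnion_of_subset i (Set.subset_iUnion _ j)
  set G : Fin m → V n → ℝ := fun i => (S i ∩ U).indicator 1 with hG
  have hGmeas : ∀ i, MeasurableSet (S i ∩ U) := fun i => (measurableSet_sside _).inter hUmeas
  have hGint : ∀ i, Integrable (G i) volume := by
    intro i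
    rw [hG]
    rw [integrable_indicator_iff (hGmeas i)]
    exact integrableOn_const
      ((lt_of_le_of_lt (measure_mono Set.inter_subset_right) hUfin).ne)
  have hGmul : ∀ i j, G i * G j = ((S i ∩ U) ∩ (S j ∩ U)).indicator (1 : V n → ℝ) := by
    intro i j
    rw [hG]
    exact (Set.inter_indicator_one).symm
  have hGmulint : ∀ i j, Integrable (G i * G j) volume := by
    intro i j
    rw [hGmul i j, integrable_indicator_iff ((hGmeas i).inter (hGmeas j))]
    exact integrableOn_const
      ((lt_of_le_of_lt (measure_mono (Set.inter_subset_left.trans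
        Set.inter_subset_right)) hUfin).ne)
  set a : Fin m → ℝ := fun i => ∫ w, G i w with ha
  set b : Fin m → Fin m → ℝ := fun i j => ∫ w, G i w * G j w with hb
  have hstep1 : ∀ i j, (volume (T i j)).toReal = a i + a j - 2 * b i j := by
    intro i j
    have hpt : ∀ w, (T i j).indicator (1 : V n → ℝ) w
        = G i w + G j w - 2 * (G i w * G j w) := by
      intro w
      by_cases hu : w ∈ U
      · by_cases hi : w ∈ S i <;> by_cases hj : w ∈ S j <;>
          simp [hTdef, hG, Set.indicator_apply, hi, hj, hu, Set.mem_union, Set.mem_diff,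
            Set.mem_inter_iff] <;> ring
      · have hnt : w ∉ T i j := fun h => hu (hTU i j h)
        have hni : w ∉ S i ∩ U := fun h => hu h.2
        have hnj : w ∉ S j ∩ U := fun h => hu h.2
        simp [hG, Set.indicator_of_notMem, hnt, hni, hnj]
    rw [← measureReal_def, ← integral_indicator_one (hTmeas i j)]
    calc (∫ w, (T i j).indicator 1 w)
        = ∫ w, (G i w + G j w - 2 * (G i w * G j w)) := by
          congr 1
          funext w
          exact hpt w
      _ = a i + a j - 2 * b i j := by
          have h1 : Integrable (fun w => G i w + G j w) volume := (hGint i).add (hGint j)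
          have h2 : Integrable (fun w => 2 * (G i w * G j w)) volume := by
            have h4 := (hGmulint i j).const_mul (2:ℝ)
            simpa [Pi.mul_apply] using h4
          rw [integral_sub h1 h2, integral_add (hGint i) (hGint j), integral_const_mul]
  have hsum_a1 : ∑ i, ∑ j, lam i * lam j * a i = 0 := by
    have h1 : ∀ i : Fin m, ∑ j, lam i * lam j * a i = (lam i * a i) * ∑ j, lam j := by
      intro i
      rw [Finset.mul_sum]
      exact Finset.sum_congr rfl fun j _ => by ring
    rw [Finset.sum_congr rfl fun i _ => h1 i]
    simp [hlam]
  have hsum_a2 : ∑ i, ∑ j, lam i * lam j * a j = 0 := by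
    have h1 : ∀ i : Fin m, ∑ j, lam i * lam j * a j = lam i * ∑ j, lam j * a j := by
      intro i
      rw [Finset.mul_sum]
      exact Finset.sum_congr rfl fun j _ => by ring
    rw [Finset.sum_congr rfl fun i _ => h1 i, ← Finset.sum_mul, hlam, zero_mul]
  have hint : ∀ (i j : Fin m), Integrable (fun w => lam i * lam j * (G i w * G j w)) volume :=
    fun i j => (hGmulint i j).const_mul _
  have hbq : 0 ≤ ∑ i, ∑ j, lam i * lam j * b i j := by
    have h2 : (∫ w, (∑ i, lam i * G i w) ^ 2) = ∑ i, ∑ j, lam i * lam j * b i j := by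
      have hpt2 : ∀ w, (∑ i, lam i * G i w) ^ 2
          = ∑ i, ∑ j, lam i * lam j * (G i w * G j w) := by
        intro w
        rw [sq, Finset.sum_mul_sum]
        exact Finset.sum_congr rfl fun i _ => Finset.sum_congr rfl fun j _ => by ring
      calc (∫ w, (∑ i, lam i * G i w) ^ 2)
          = ∫ w, ∑ i, ∑ j, lam i * lam j * (G i w * G j w) := by
            congr 1
            funext w
            exact hpt2 w
        _ = ∑ i, ∫ w, ∑ j, lam i * lam j * (G i w * G j w) :=
            integral_finset_sum _ (fun i _ => integrable_finset_sum _ (fun j _ => hint i j))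
        _ = ∑ i, ∑ j, ∫ w, lam i * lam j * (G i w * G j w) :=
            Finset.sum_congr rfl fun i _ => integral_finset_sum _ (fun j _ => hint i j)
        _ = ∑ i, ∑ j, lam i * lam j * b i j :=
            Finset.sum_congr rfl fun i _ => Finset.sum_congr rfl fun j _ => by
              rw [integral_const_mul]
    rw [← h2]
    exact integral_nonneg fun w => sq_nonneg _
  have hmain : ∑ i, ∑ j, lam i * lam j * (volume (T i j)).toReal ≤ 0 := by
    calc ∑ i, ∑ j, lam i * lam j * (volume (T i j)).toReal
        = ∑ i, ∑ j, (lam i * lam j * a i + lam i * lam j * a j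
            - 2 * (lam i * lam j * b i j)) := by
          refine Finset.sum_congr rfl fun i _ => Finset.sum_congr rfl fun j _ => ?_
          rw [hstep1 i j]
          ring
      _ = (∑ i, ∑ j, lam i * lam j * a i) + (∑ i, ∑ j, lam i * lam j * a j)
            - 2 * (∑ i, ∑ j, lam i * lam j * b i j) := by
          simp only [Finset.sum_sub_distrib, Finset.sum_add_distrib, Finset.mul_sum]
      _ ≤ 0 := by
          rw [hsum_a1, hsum_a2]
          linarith [hbq]
  have hg1 : (0:ℝ) < g n 1 := g_one_pos
  calc ∑ i, ∑ j, lam i * lam j * _root_.arcosh (-(minkB (x i) (x j)))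
      = (∑ i, ∑ j, lam i * lam j * (volume (T i j)).toReal) / g n 1 := by
        rw [Finset.sum_div]
        refine Finset.sum_congr rfl fun i _ => ?_
        rw [Finset.sum_div]
        refine Finset.sum_congr rfl fun j _ => ?_
        rw [hTtoReal i j]
        field_simp
    _ ≤ 0 := div_nonpos_iff.2 (Or.inr ⟨hmain, hg1.le⟩)






end
end

section
/- For each x ∈ Iⁿ let Φ(x) ∈ L²(μ) be (the class of) the indicator function of {u : B(x,u)·B(o,u) < 0}, where o = (1,0,…,0). Then Φ(x) is indeed square-integrable for every x ∈ Iⁿ, and for all x, y ∈ Iⁿ, ‖Φ(x) - Φ(y)‖²_{L²(μ)} = μ({u : B(x,u)·B(y,u) < 0}). -/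
open MeasureTheory Real Metric
open scoped symmDiff ENNReal NNReal

noncomputable section

/-- The basepoint `o = (1, 0, …, 0) ∈ Iⁿ`. -/
def basept (n : ℕ) : ℝ × EuclideanSpace ℝ (Fin n) := (1, 0)

/-- `Φ(x)`: the indicator function of the set of walls separating `x` from the basepoint `o`. -/
def wallInd (n : ℕ) (x : ℝ × EuclideanSpace ℝ (Fin n)) :
    (ℝ × EuclideanSpace ℝ (Fin n)) → ℝ :=
  Set.indicator {u | minkB x u * minkB (basept n) u < 0} (fun _ => (1 : ℝ))

variable {n : ℕ}

lemma cont_minkB (x : ℝ × EuclideanSpace ℝ (Fin n)) : Continuous (fun u => minkB x u) := by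
  exact ((continuous_const.mul continuous_fst).neg).add
    (Continuous.inner continuous_const continuous_snd)

lemma meas_dSParam : Measurable (dSParam n) := by
  apply Continuous.measurable; unfold dSParam; fun_prop

lemma minkB_dSParam (z : ℝ × EuclideanSpace ℝ (Fin n)) (p : ℝ × sphere (0 : EuclideanSpace ℝ (Fin n)) 1) :
    minkB z (dSParam n p) = -(z.1 * Real.sinh p.1) + Real.cosh p.1 * inner ℝ z.2 (p.2 : EuclideanSpace ℝ (Fin n)) := by
  simp only [minkB, dSParam, real_inner_smul_right]

lemma meas_sep (x y : ℝ × EuclideanSpace ℝ (Fin n)) :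
    MeasurableSet {u | minkB x u * minkB y u < 0} :=
  (isOpen_lt ((cont_minkB x).mul (cont_minkB y)) continuous_const).measurableSet

lemma null_wall (z : ℝ × EuclideanSpace ℝ (Fin n)) (hz : z ∈ hypI n) :
    wallMeasure n {u | minkB z u = 0} = 0 := by
  have hzpos : 0 < z.1 := hz.2
  have hmeasS : MeasurableSet {u : ℝ × EuclideanSpace ℝ (Fin n) | minkB z u = 0} :=
    (isClosed_eq (cont_minkB z) continuous_const).measurableSet
  rw [wallMeasure, Measure.map_apply meas_dSParam hmeasS,
    Measure.prod_apply_symm (meas_dSParam hmeasS)]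
  have hz0 : ∀ ω : sphere (0 : EuclideanSpace ℝ (Fin n)) 1,
      ((volume : Measure ℝ).withDensity fun r => ENNReal.ofReal (Real.cosh r ^ (n-1)))
        ((fun r => (r, ω)) ⁻¹' (dSParam n ⁻¹' {u | minkB z u = 0})) = 0 := by
    intro ω
    have hsub : ((fun r => (r, ω)) ⁻¹' (dSParam n ⁻¹' {u | minkB z u = 0})).Subsingleton := by
      intro r₁ h₁ r₂ h₂
      simp only [Set.mem_preimage, Set.mem_setOf_eq, minkB_dSParam] at h₁ h₂
      have key : z.1 * (Real.sinh r₁ * Real.cosh r₂ - Real.cosh r₁ * Real.sinh r₂) = 0 := by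
        linear_combination Real.cosh r₂ * (-h₁) - Real.cosh r₁ * (-h₂)
      have h0 : Real.sinh r₁ * Real.cosh r₂ - Real.cosh r₁ * Real.sinh r₂ = 0 := by
        rcases mul_eq_zero.1 key with h | h
        · exact absurd h (ne_of_gt hzpos)
        · exact h
      have : r₁ - r₂ = 0 := Real.sinh_injective (by rw [Real.sinh_sub, h0, Real.sinh_zero])
      linarith
    exact withDensity_absolutelyContinuous volume _
      (hsub.countable.measure_zero _)
  simp only [hz0, lintegral_zero]

lemma basept_mem : basept n ∈ hypI n := by
  constructor
  · simp [minkB, basept]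
  · norm_num [basept]

lemma finite_sep (x : ℝ × EuclideanSpace ℝ (Fin n)) (hx : x ∈ hypI n) :
    wallMeasure n {u | minkB x u * minkB (basept n) u < 0} < ⊤ := by
  have hxpos : 0 < x.1 := hx.2
  have hx2 : x.1 ^ 2 = 1 + ‖x.2‖ ^ 2 := by
    have h := hx.1
    rw [minkB, real_inner_self_eq_norm_sq] at h
    nlinarith
  set N := ‖x.2‖ with hN
  have hN0 : 0 ≤ N := norm_nonneg _
  set R := Real.arsinh N with hR
  have hR0 : 0 ≤ R := Real.arsinh_nonneg_iff.2 hN0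
  rw [wallMeasure, Measure.map_apply meas_dSParam (meas_sep x (basept n))]
  have hsub : dSParam n ⁻¹' {u | minkB x u * minkB (basept n) u < 0}
      ⊆ Set.Icc (-R) R ×ˢ Set.univ := by
    rintro ⟨r, ω⟩ hp
    simp only [Set.mem_preimage, Set.mem_setOf_eq, minkB_dSParam, basept] at hp
    simp only [inner_zero_left, mul_zero, add_zero, one_mul] at hp
    set c : ℝ := inner ℝ x.2 (ω : EuclideanSpace ℝ (Fin n)) with hc
    have hcb : |c| ≤ N := by
      calc |c| ≤ ‖x.2‖ * ‖(ω : EuclideanSpace ℝ (Fin n))‖ := abs_real_inner_le_norm _ _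
      _ = N := by rw [norm_eq_of_mem_sphere ω, mul_one]
    have hch : 0 < Real.cosh r := Real.cosh_pos r
    have hchsq : Real.cosh r ^ 2 = 1 + Real.sinh r ^ 2 := Real.cosh_sq' r
    have hc2 : c ^ 2 ≤ N ^ 2 := sq_le_sq' (abs_le.1 hcb).1 (abs_le.1 hcb).2
    have hchc2 : (Real.cosh r) ^ 2 * c ^ 2 ≤ (Real.cosh r) ^ 2 * N ^ 2 :=
      mul_le_mul_of_nonneg_left hc2 (sq_nonneg _)
    have habs : |Real.sinh r| ≤ N := by
      rcases lt_trichotomy (Real.sinh r) 0 with hs | hs | hs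
      · have h1 : Real.cosh r * c < x.1 * Real.sinh r := by nlinarith
        have hneg : x.1 * Real.sinh r < 0 := mul_neg_of_pos_of_neg hxpos hs
        have hsq : (x.1 * Real.sinh r) ^ 2 < (Real.cosh r * c) ^ 2 := by nlinarith
        rw [abs_of_neg hs]
        nlinarith [hsq, hchc2, hchsq, hx2, hN0]
      · simp [hs, hN0]
      · have h1 : x.1 * Real.sinh r < Real.cosh r * c := by nlinarith
        have hpos : 0 < x.1 * Real.sinh r := mul_pos hxpos hs
        have hsq : (x.1 * Real.sinh r) ^ 2 < (Real.cosh r * c) ^ 2 := by nlinarith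
        rw [abs_of_pos hs]
        nlinarith [hsq, hchc2, hchsq, hx2, hN0]
    constructor
    · have h1 : Real.sinh (-R) ≤ Real.sinh r := by
        rw [Real.sinh_neg, hR, Real.sinh_arsinh]
        linarith [abs_le.1 habs]
      have := Real.sinh_le_sinh.1 h1
      exact ⟨this, Real.sinh_le_sinh.1 (by rw [hR, Real.sinh_arsinh]; linarith [abs_le.1 habs])⟩
    · trivial
  apply lt_of_le_of_lt (measure_mono hsub)
  rw [Measure.prod_prod]
  apply ENNReal.mul_lt_top _ (measure_lt_top _ _)
  rw [withDensity_apply _ measurableSet_Icc]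
  calc ∫⁻ r in Set.Icc (-R) R, ENNReal.ofReal (Real.cosh r ^ (n - 1))
      ≤ ∫⁻ _ in Set.Icc (-R) R, ENNReal.ofReal (Real.cosh R ^ (n - 1)) := by
        apply setLIntegral_mono measurable_const
        intro r hr
        apply ENNReal.ofReal_le_ofReal
        apply pow_le_pow_left₀ (Real.cosh_pos r).le
        exact Real.cosh_le_cosh.2 (by rw [abs_of_nonneg hR0]; exact abs_le.2 ⟨hr.1, hr.2⟩)
    _ = ENNReal.ofReal (Real.cosh R ^ (n - 1)) * volume (Set.Icc (-R) R) :=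
        setLIntegral_const _ _
    _ < ⊤ := by
        apply ENNReal.mul_lt_top ENNReal.ofReal_lt_top
        rw [Real.volume_Icc]
        exact ENNReal.ofReal_lt_top

lemma sign_iff {a b c : ℝ} (ha : a ≠ 0) (hb : b ≠ 0) (hc : c ≠ 0) :
    ((a*c<0 ∧ ¬ b*c<0) ∨ (b*c<0 ∧ ¬ a*c<0)) ↔ a*b<0 := by
  have hp : a*c ≠ 0 := mul_ne_zero ha hc
  have hq : b*c ≠ 0 := mul_ne_zero hb hc
  have hcc : 0 < c*c := mul_self_pos.2 hc
  have h2 : a*b<0 ↔ (a*c)*(b*c) < 0 := by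
    constructor <;> intro h
    · nlinarith
    · nlinarith
  rw [h2]
  conv_rhs => rw [mul_neg_iff]
  constructor
  · rintro (⟨h1, h2⟩|⟨h1, h2⟩)
    · exact Or.inr ⟨h1, (not_lt.1 h2).lt_of_ne (Ne.symm hq)⟩
    · exact Or.inl ⟨(not_lt.1 h2).lt_of_ne (Ne.symm hp), h1⟩
  · rintro (⟨h1, h2⟩|⟨h1, h2⟩)
    · exact Or.inr ⟨h2, not_lt.2 h1.le⟩
    · exact Or.inl ⟨h1, not_lt.2 h2.le⟩

lemma symmdiff_ae (x y : ℝ × EuclideanSpace ℝ (Fin n)) (hx : x ∈ hypI n) (hy : y ∈ hypI n) :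
    wallMeasure n ({u | minkB x u * minkB (basept n) u < 0}
        ∆ {u | minkB y u * minkB (basept n) u < 0})
      = wallMeasure n {u | minkB x u * minkB y u < 0} := by
  apply measure_congr
  have hN : wallMeasure n ({u : ℝ × EuclideanSpace ℝ (Fin n) | minkB x u = 0}
      ∪ {u | minkB y u = 0} ∪ {u | minkB (basept n) u = 0}) = 0 :=
    measure_union_null (measure_union_null (null_wall x hx) (null_wall y hy))
      (null_wall _ basept_mem)
  rw [Filter.eventuallyEq_set]
  have h1 : ∀ᵐ u ∂wallMeasure n, u ∉ ({u : ℝ × EuclideanSpace ℝ (Fin n) | minkB x u = 0}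
      ∪ {u | minkB y u = 0} ∪ {u | minkB (basept n) u = 0}) := by
    rw [ae_iff]
    refine measure_mono_null (fun u hu => ?_) hN
    exact Set.not_notMem.1 hu
  filter_upwards [h1] with u hu
  simp only [Set.mem_union, Set.mem_setOf_eq, not_or] at hu
  obtain ⟨⟨ha, hb⟩, hc⟩ := hu
  simp only [Set.mem_symmDiff, Set.mem_setOf_eq]
  exact sign_iff ha hb hc

/-- Each `Φ(x)` is square-integrable with respect to `μ`, and
`‖Φ(x) - Φ(y)‖²_{L²(μ)} = μ({u : B(x,u)·B(y,u) < 0})`. -/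
theorem wallInd_memL2_and_dist (n : ℕ) (hn : 2 ≤ n) :
    (∀ x ∈ hypI n, MemLp (wallInd n x) 2 (wallMeasure n)) ∧
    (∀ x ∈ hypI n, ∀ y ∈ hypI n,
      (eLpNorm (wallInd n x - wallInd n y) 2 (wallMeasure n)) ^ 2
        = wallMeasure n {u : ℝ × EuclideanSpace ℝ (Fin n) | minkB x u * minkB y u < 0}) := by
  constructor
  · intro x hx
    exact memLp_indicator_const 2 (meas_sep x (basept n)) 1 (Or.inr (finite_sep x hx).ne)
  · intro x hx y hy
    have hAB : MeasurableSet (({u : ℝ × EuclideanSpace ℝ (Fin n) |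
        minkB x u * minkB (basept n) u < 0}) ∆ ({u | minkB y u * minkB (basept n) u < 0})) :=
      MeasurableSet.symmDiff (meas_sep x _) (meas_sep y _)
    have hpt : ∀ u, (‖(wallInd n x - wallInd n y) u‖ₑ) ^ (2:ℝ)
        = (({u : ℝ × EuclideanSpace ℝ (Fin n) | minkB x u * minkB (basept n) u < 0})
            ∆ ({u | minkB y u * minkB (basept n) u < 0})).indicator
          (fun _ => (1:ℝ≥0∞)) u := by
      intro u
      by_cases hA1 : minkB x u * minkB (basept n) u < 0 <;>
        by_cases hB1 : minkB y u * minkB (basept n) u < 0 <;>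
          simp [wallInd, Set.indicator, Set.mem_symmDiff, hA1, hB1,
            ENNReal.zero_rpow_of_pos]
    rw [eLpNorm_eq_lintegral_rpow_enorm_toReal (by norm_num) (by norm_num)]
    simp only [ENNReal.toReal_ofNat]
    rw [lintegral_congr hpt, lintegral_indicator hAB, setLIntegral_one,
      ← ENNReal.rpow_natCast _ 2, ← ENNReal.rpow_mul]
    norm_num
    exact symmdiff_ae x y hx hy

end
end
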